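/- arXiv:2409.20275 — 4 statements merged into one kernel-verified Lean document; each statement's English description precedes it below -/
import Mathlib

section
/- A real n×m matrix X is strictly totally positive if and only if all of its row-initial and column-initial minors are positive, i.e., det(X_{(t:t+j−1),(1:j)}) > 0 and det(X_{(1:j),(t:t+j−1)}) > 0 for every order j ∈ {1,…,min{n,m}} and every admissible starting index t. -/
open Matrix Polynomial Filter

noncomputable def signChanges (l : List ℝ) : ℕ :=
  (l.zip l.tail).countP (fun p => decide (p.1 * p.2 < 0))

/-- Variation `V(u)`: number of sign changes after deleting zero entries, `-1` for the
zero vector. -/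
noncomputable def variation {m : ℕ} (u : Fin m → ℝ) : ℤ :=
  if ((List.ofFn u).filter fun x => decide (x ≠ 0)) = [] then -1
  else (signChanges ((List.ofFn u).filter fun x => decide (x ≠ 0)) : ℤ)

/-- Maximal variation `V_z(u)`: largest number of sign changes obtainable by replacing every
zero entry of `u` by an arbitrary nonzero real number. -/
noncomputable def maxVariation {m : ℕ} (u : Fin m → ℝ) : ℤ :=
  sSup {v : ℤ | ∃ w : Fin m → ℝ, (∀ i, w i ≠ 0) ∧ (∀ i, u i ≠ 0 → w i = u i) ∧
    v = (signChanges (List.ofFn w) : ℤ)}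

/-- `X` is strictly `k`-variation bounding. -/
def SVB {n m : ℕ} (X : Matrix (Fin n) (Fin m) ℝ) (k : ℕ) : Prop :=
  ∀ u : Fin m → ℝ, u ≠ 0 → variation u ≤ (k : ℤ) → maxVariation (X.mulVec u) ≤ (k : ℤ)

/-- `X` is `k`-variation bounding. -/
def VB {n m : ℕ} (X : Matrix (Fin n) (Fin m) ℝ) (k : ℕ) : Prop :=
  ∀ u : Fin m → ℝ, u ≠ 0 → variation u ≤ (k : ℤ) → variation (X.mulVec u) ≤ (k : ℤ)

/-- `X` is `k`-variation diminishing. -/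
def VD {n m : ℕ} (X : Matrix (Fin n) (Fin m) ℝ) (k : ℕ) : Prop :=
  ∀ j : ℕ, j ≤ k → VB X j

/-- `X` is strictly `k`-sign consistent: all `k×k` minors strictly positive, or all strictly
negative. -/
def SSC {n m : ℕ} (X : Matrix (Fin n) (Fin m) ℝ) (k : ℕ) : Prop :=
  (∀ (f : Fin k → Fin n) (g : Fin k → Fin m), StrictMono f → StrictMono g →
    0 < (X.submatrix f g).det) ∨
  (∀ (f : Fin k → Fin n) (g : Fin k → Fin m), StrictMono f → StrictMono g →
    (X.submatrix f g).det < 0)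

/-- `X` is `k`-sign consistent: all `k×k` minors nonnegative, or all nonpositive. -/
def SC {n m : ℕ} (X : Matrix (Fin n) (Fin m) ℝ) (k : ℕ) : Prop :=
  (∀ (f : Fin k → Fin n) (g : Fin k → Fin m), StrictMono f → StrictMono g →
    0 ≤ (X.submatrix f g).det) ∨
  (∀ (f : Fin k → Fin n) (g : Fin k → Fin m), StrictMono f → StrictMono g →
    (X.submatrix f g).det ≤ 0)

/-- `X` is `k`-sign regular. -/
def SR {n m : ℕ} (X : Matrix (Fin n) (Fin m) ℝ) (k : ℕ) : Prop :=
  ∀ j : ℕ, 1 ≤ j → j ≤ k → SC X j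

/-- `X` is strictly totally positive. -/
def STP {n m : ℕ} (X : Matrix (Fin n) (Fin m) ℝ) : Prop :=
  ∀ (j : ℕ) (f : Fin j → Fin n) (g : Fin j → Fin m), StrictMono f → StrictMono g →
    0 < (X.submatrix f g).det

/-- `X` is `k`-positive: all `j×j` minors nonnegative for `j = 1, …, k`. -/
def KPos {n m : ℕ} (X : Matrix (Fin n) (Fin m) ℝ) (k : ℕ) : Prop :=
  ∀ j : ℕ, 1 ≤ j → j ≤ k → ∀ (f : Fin j → Fin n) (g : Fin j → Fin m),
    StrictMono f → StrictMono g → 0 ≤ (X.submatrix f g).det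

/-- `X` is strictly `k`-positive: all `j×j` minors positive for `j = 1, …, k`. -/
def KPosStrict {n m : ℕ} (X : Matrix (Fin n) (Fin m) ℝ) (k : ℕ) : Prop :=
  ∀ j : ℕ, 1 ≤ j → j ≤ k → ∀ (f : Fin j → Fin n) (g : Fin j → Fin m),
    StrictMono f → StrictMono g → 0 < (X.submatrix f g).det

/-- The `t`-step observability matrix `O_t` with `i`-th row `c Aⁱ⁻¹`. -/
noncomputable def obsMat {n : ℕ} (A : Matrix (Fin n) (Fin n) ℝ) (c : Fin n → ℝ) (t : ℕ) :
    Matrix (Fin t) (Fin n) ℝ :=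
  Matrix.of fun i j => Matrix.vecMul c (A ^ (i : ℕ)) j

/-- The pair `(A, c)` is observable. -/
def Observable {n : ℕ} (A : Matrix (Fin n) (Fin n) ℝ) (c : Fin n → ℝ) : Prop :=
  (obsMat A c n).det ≠ 0

/-- The observability operator of `(A, c)` is strictly `k`-variation bounding. -/
def ObsSVB {n : ℕ} (A : Matrix (Fin n) (Fin n) ℝ) (c : Fin n → ℝ) (k : ℕ) : Prop :=
  ∀ t : ℕ, 0 < t → SVB (obsMat A c t) k

/-- The observability operator of `(A, c)` is `k`-variation bounding. -/
def ObsVB {n : ℕ} (A : Matrix (Fin n) (Fin n) ℝ) (c : Fin n → ℝ) (k : ℕ) : Prop :=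
  ∀ t : ℕ, 0 < t → VB (obsMat A c t) k

/-- The matrix `M_r[t]`: first `n - r` rows `c, cA, …, cA^{n-r-1}`, last `r` rows
`cA^{n-r+t-1}, …, cA^{n+t-2}`. -/
noncomputable def Mrt {n : ℕ} (A : Matrix (Fin n) (Fin n) ℝ) (c : Fin n → ℝ) (r t : ℕ) :
    Matrix (Fin n) (Fin n) ℝ :=
  Matrix.of fun i j =>
    Matrix.vecMul c (A ^ (if (i : ℕ) < n - r then (i : ℕ) else (i : ℕ) + t - 1)) j

section GPwork
variable {R : Type*} [CommRing R]

variable {R : Type*} [CommRing R]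

lemma det_one_updateRow_two {k : ℕ} (u v : Fin (k+2) → R) :
    (((1 : Matrix (Fin (k+2)) (Fin (k+2)) R).updateRow 0 u).updateRow (Fin.last (k+1)) v).det
      = u 0 * v (Fin.last (k+1)) - u (Fin.last (k+1)) * v 0 := by
  have h0l : (0 : Fin (k+2)) ≠ Fin.last (k+1) := by
    simp [Fin.ext_iff]
  set e : Fin (k+2) → Fin (k+2) → R := fun i j => if i = j then 1 else 0 with he
  have key : ∀ i j : Fin (k+2),
      (((1 : Matrix (Fin (k+2)) (Fin (k+2)) R).updateRow 0 (e i)).updateRow (Fin.last (k+1)) (e j)).det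
        = (if i = 0 ∧ j = Fin.last (k+1) then 1 else if i = Fin.last (k+1) ∧ j = 0 then -1 else 0) := by
    intro i j
    set M := ((1 : Matrix (Fin (k+2)) (Fin (k+2)) R).updateRow 0 (e i)).updateRow (Fin.last (k+1)) (e j) with hM
    have hrow0 : M 0 = e i := by
      rw [hM, updateRow_ne h0l, updateRow_self]
    have hrowl : M (Fin.last (k+1)) = e j := by
      rw [hM, updateRow_self]
    have hrowmid : ∀ a : Fin (k+2), a ≠ 0 → a ≠ Fin.last (k+1) → M a = e a := by
      intro a ha0 hal
      rw [hM, updateRow_ne hal, updateRow_ne ha0]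
      funext b; simp [Matrix.one_apply, he]
    have hval : M.det = (if i = 0 ∧ j = Fin.last (k+1) then 1
        else if i = Fin.last (k+1) ∧ j = 0 then (-1 : R) else 0) := by
      by_cases hij : i = j
      · subst hij
        rw [Matrix.det_zero_of_row_eq h0l (hrow0.trans hrowl.symm)]
        split_ifs with h1 h2
        · exact absurd (h1.1.symm.trans h1.2) h0l
        · exact absurd (h2.2.symm.trans h2.1) h0l
        · rfl
      by_cases hi : i = 0
      · by_cases hj : j = Fin.last (k+1)
        · subst hi hj
          have hone : M = 1 := by
            funext a b
            by_cases ha0 : a = 0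
            · subst ha0; rw [hrow0]; simp [he, Matrix.one_apply]
            by_cases hal : a = Fin.last (k+1)
            · subst hal; rw [hrowl]; simp [he, Matrix.one_apply]
            · rw [hrowmid a ha0 hal]; simp [he, Matrix.one_apply]
          rw [hone, det_one, if_pos ⟨rfl, rfl⟩]
        · -- j ≠ last, and j ≠ i = 0; row j = e j = row last
          subst hi
          rw [Matrix.det_zero_of_row_eq hj (by rw [hrowl, hrowmid j (Ne.symm hij) hj])]
          split_ifs with h1 h2
          · exact absurd h1.2 hj
          · exact absurd h2.1 h0l
          · rfl
      by_cases hil : i = Fin.last (k+1)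
      · by_cases hj : j = 0
        · subst hil hj
          have hswap : M = (1 : Matrix (Fin (k+2)) (Fin (k+2)) R).submatrix
              (Equiv.swap 0 (Fin.last (k+1))) id := by
            funext a b
            by_cases ha0 : a = 0
            · subst ha0; rw [hrow0]; simp [he, Matrix.one_apply, Equiv.swap_apply_left]
            by_cases hal : a = Fin.last (k+1)
            · subst hal; rw [hrowl]; simp [he, Matrix.one_apply, Equiv.swap_apply_right]
            · rw [hrowmid a ha0 hal]
              simp [he, Matrix.one_apply, Equiv.swap_apply_of_ne_of_ne ha0 hal]
          rw [hswap, Matrix.det_permute, Equiv.Perm.sign_swap h0l, det_one]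
          rw [if_neg (fun h => h0l h.2), if_pos ⟨rfl, rfl⟩]
          simp
        · -- i = last, j ≠ 0, j ≠ last : row j = e j = row last
          subst hil
          rw [Matrix.det_zero_of_row_eq (show j ≠ Fin.last (k+1) from Ne.symm hij)
            (by rw [hrowl, hrowmid j hj (Ne.symm hij)])]
          split_ifs with h1 h2
          · exact absurd h1.1 (Ne.symm h0l)
          · exact absurd h2.2 hj
          · rfl
      · -- i ≠ 0, i ≠ last : row i = e i = row 0
        rw [Matrix.det_zero_of_row_eq (Ne.symm hi) (by rw [hrow0, hrowmid i hi hil])]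
        split_ifs with h1 h2
        · exact absurd h1.1 hi
        · exact absurd h2.1 hil
        · rfl
    exact hval
  have expand : ∀ (M : Matrix (Fin (k+2)) (Fin (k+2)) R) (j : Fin (k+2)) (w : Fin (k+2) → R),
      (M.updateRow j w).det = ∑ i, w i * (M.updateRow j (e i)).det := by
    intro M j w
    have h1 : w = ∑ i, w i • e i := by
      rw [he]; exact pi_eq_sum_univ w
    conv_lhs => rw [h1]
    have h2 := (Matrix.detRowAlternating (R := R) (n := Fin (k+2))).toMultilinearMap.map_update_sum
      Finset.univ j (fun i => w i • e i) M
    have h3 : (M.updateRow j (∑ i, w i • e i)).det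
        = ∑ i, (M.updateRow j (w i • e i)).det := h2
    rw [h3]
    refine Finset.sum_congr rfl fun i _ => ?_
    rw [Matrix.det_updateRow_smul]
  have hcomm : ∀ (w w' : Fin (k+2) → R),
      ((1 : Matrix (Fin (k+2)) (Fin (k+2)) R).updateRow 0 w).updateRow (Fin.last (k+1)) w'
      = ((1 : Matrix (Fin (k+2)) (Fin (k+2)) R).updateRow (Fin.last (k+1)) w').updateRow 0 w := by
    intro w w'
    funext a b
    rcases eq_or_ne a 0 with rfl | ha0
    · rw [updateRow_ne h0l, updateRow_self, updateRow_self]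
    rcases eq_or_ne a (Fin.last (k+1)) with rfl | hal
    · rw [updateRow_self, updateRow_ne (Ne.symm h0l), updateRow_self]
    · rw [updateRow_ne hal, updateRow_ne ha0, updateRow_ne ha0, updateRow_ne hal]
  rw [expand]
  have inner : ∀ j, (((1 : Matrix (Fin (k+2)) (Fin (k+2)) R).updateRow 0 u).updateRow
      (Fin.last (k+1)) (e j)).det
      = (if j = Fin.last (k+1) then u 0 else 0) + (if j = 0 then -u (Fin.last (k+1)) else 0) := by
    intro j
    rw [hcomm, expand]
    have : ∀ i : Fin (k+2), u i * (((1 : Matrix (Fin (k+2)) (Fin (k+2)) R).updateRow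
        (Fin.last (k+1)) (e j)).updateRow 0 (e i)).det
        = (if i = 0 then (if j = Fin.last (k+1) then u 0 else 0) else 0)
          + (if i = Fin.last (k+1) then (if j = 0 then -u (Fin.last (k+1)) else 0) else 0) := by
      intro i
      rw [← hcomm, key]
      by_cases hi0 : i = 0
      · subst hi0
        simp only [if_pos rfl, if_neg h0l]
        by_cases hjl : j = Fin.last (k+1)
        · subst hjl; simp
        · simp [hjl]
      by_cases hil : i = Fin.last (k+1)
      · subst hil
        simp only [if_neg (Ne.symm h0l), if_pos rfl, if_neg hi0]
        by_cases hj0 : j = 0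
        · subst hj0
          simp [h0l, Ne.symm h0l]
        · simp [hj0, Ne.symm h0l]
      · simp [hi0, hil]
    rw [Finset.sum_congr rfl fun i _ => this i, Finset.sum_add_distrib]
    rw [Finset.sum_ite_eq' Finset.univ 0 (fun _ => if j = Fin.last (k+1) then u 0 else 0)]
    rw [Finset.sum_ite_eq' Finset.univ (Fin.last (k+1))
      (fun _ => if j = 0 then -u (Fin.last (k+1)) else 0)]
    simp
  rw [Finset.sum_congr rfl fun j _ => by rw [inner j]]
  have : ∀ j : Fin (k+2), v j * ((if j = Fin.last (k+1) then u 0 else 0)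
      + (if j = 0 then -u (Fin.last (k+1)) else 0))
      = (if j = Fin.last (k+1) then v (Fin.last (k+1)) * u 0 else 0)
        + (if j = 0 then -(v 0 * u (Fin.last (k+1))) else 0) := by
    intro j
    by_cases hjl : j = Fin.last (k+1)
    · subst hjl; simp [Ne.symm h0l]
    by_cases hj0 : j = 0
    · subst hj0; simp [h0l]
    · simp [hjl, hj0]
  rw [Finset.sum_congr rfl fun j _ => this j, Finset.sum_add_distrib,
    Finset.sum_ite_eq' Finset.univ (Fin.last (k+1)) (fun _ => v (Fin.last (k+1)) * u 0),
    Finset.sum_ite_eq' Finset.univ 0 (fun _ => -(v 0 * u (Fin.last (k+1))))]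
  simp; ring




lemma det_updateRow_basis {k : ℕ} (A : Matrix (Fin (k+2)) (Fin (k+2)) R) :
    ((A.updateRow 0 (fun j => if (0 : Fin (k+2)) = j then 1 else 0)).updateRow (Fin.last (k+1))
      (fun j => if Fin.last (k+1) = j then 1 else 0)).det
      = (A.submatrix (Fin.succ ∘ Fin.castSucc) (Fin.succ ∘ Fin.castSucc)).det := by
  have h0l : (0 : Fin (k+2)) ≠ Fin.last (k+1) := by simp [Fin.ext_iff]
  set M := (A.updateRow 0 (fun j => if (0 : Fin (k+2)) = j then 1 else 0)).updateRow
    (Fin.last (k+1)) (fun j => if Fin.last (k+1) = j then 1 else 0) with hM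
  have hrow0 : M 0 = fun j => if (0 : Fin (k+2)) = j then 1 else 0 := by
    rw [hM, updateRow_ne h0l, updateRow_self]
  have hsub : M.submatrix Fin.succ (Fin.succAbove 0)
      = (A.submatrix Fin.succ Fin.succ).updateRow (Fin.last k)
        (fun j => if Fin.last k = j then 1 else 0) := by
    funext a b
    rw [Fin.succAbove_zero]
    by_cases hal : a = Fin.last k
    · subst hal
      have h1 : (Fin.last k).succ = Fin.last (k+1) := rfl
      simp only [submatrix_apply, h1, hM, updateRow_self, updateRow_self]
      by_cases hb : Fin.last k = b
      · simp [← hb]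
      · rw [if_neg hb, if_neg (fun h : Fin.last (k+1) = b.succ => hb (by
          have := h.symm; exact Fin.succ_injective _ (by rw [this]; rfl)))]
    · have h2 : a.succ ≠ Fin.last (k+1) := by
        intro h; exact hal (Fin.succ_injective _ (h.trans rfl))
      have h3 : a.succ ≠ 0 := Fin.succ_ne_zero a
      simp only [submatrix_apply, hM]
      rw [updateRow_ne h2, updateRow_ne h3, updateRow_ne hal]
      rfl
  have hfinal : ((A.submatrix Fin.succ Fin.succ).updateRow (Fin.last k)
      (fun j => if Fin.last k = j then 1 else 0)).submatrix Fin.castSucc Fin.castSucc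
      = A.submatrix (Fin.succ ∘ Fin.castSucc) (Fin.succ ∘ Fin.castSucc) := by
    funext a b
    simp only [submatrix_apply]
    rw [updateRow_ne (Fin.castSucc_lt_last a).ne]
    rfl
  rw [Matrix.det_succ_row_zero, Finset.sum_eq_single 0]
  · rw [hrow0]
    simp only [show (fun j => if (0:Fin (k+2)) = j then (1:R) else 0) 0 = 1 from by simp,
      Fin.val_zero, pow_zero, one_mul]
    rw [hsub, Matrix.det_succ_row _ (Fin.last k), Finset.sum_eq_single (Fin.last k)]
    · rw [updateRow_self]
      simp only [show (fun j => if Fin.last k = j then (1:R) else 0) (Fin.last k) = 1 from by simp,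
        Even.neg_one_pow (⟨(Fin.last k : ℕ), rfl⟩ : Even ((Fin.last k : ℕ) + (Fin.last k : ℕ))),
        one_mul, mul_one, Fin.succAbove_last]
      rw [hfinal]
      simp
    · intro b _ hb
      rw [updateRow_self]
      simp [Ne.symm hb]
    · intro h; exact absurd (Finset.mem_univ _) h
  · intro b _ hb
    rw [hrow0]
    simp [Ne.symm hb]
  · intro h; exact absurd (Finset.mem_univ _) h



lemma updateRow_comm' {α : Type*} {N : Type*} [DecidableEq N] [Fintype N]
    (M : Matrix N N α) {a b : N} (h : a ≠ b) (u v : N → α) :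
    (M.updateRow a u).updateRow b v = (M.updateRow b v).updateRow a u := by
  funext x y
  rcases eq_or_ne x a with rfl | hxa
  · rw [updateRow_ne h, updateRow_self, updateRow_self]
  rcases eq_or_ne x b with rfl | hxb
  · rw [updateRow_self, updateRow_ne (Ne.symm h), updateRow_self]
  · rw [updateRow_ne hxb, updateRow_ne hxa, updateRow_ne hxa, updateRow_ne hxb]

lemma dj_mul_det {k : ℕ} (A : Matrix (Fin (k+2)) (Fin (k+2)) R) :
    ((A.submatrix Fin.succ Fin.succ).det * (A.submatrix Fin.castSucc Fin.castSucc).det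
      - (A.submatrix Fin.castSucc Fin.succ).det * (A.submatrix Fin.succ Fin.castSucc).det) * A.det
    = (A.det * (A.submatrix (Fin.succ ∘ Fin.castSucc) (Fin.succ ∘ Fin.castSucc)).det) * A.det := by
  have h0l : (0 : Fin (k+2)) ≠ Fin.last (k+1) := by simp [Fin.ext_iff]
  set B := adjugate A with hB
  set C := ((1 : Matrix (Fin (k+2)) (Fin (k+2)) R).updateRow 0 (B 0)).updateRow
    (Fin.last (k+1)) (B (Fin.last (k+1))) with hC
  have hCA : C * A = (A.updateRow 0 (A.det • (fun j => if (0 : Fin (k+2)) = j then (1:R) else 0))).updateRow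
      (Fin.last (k+1)) (A.det • (fun j => if Fin.last (k+1) = j then (1:R) else 0)) := by
    funext i j
    rw [Matrix.mul_apply]
    rcases eq_or_ne i 0 with rfl | hi0
    · rw [updateRow_ne h0l, updateRow_self]
      have : ∑ t, C 0 t * A t j = (B * A) 0 j := by
        rw [Matrix.mul_apply]
        refine Finset.sum_congr rfl fun t _ => ?_
        rw [hC, updateRow_ne h0l, updateRow_self]
      rw [this, Matrix.adjugate_mul]
      simp [Matrix.one_apply, mul_ite]
    rcases eq_or_ne i (Fin.last (k+1)) with rfl | hil
    · rw [updateRow_self]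
      have : ∑ t, C (Fin.last (k+1)) t * A t j = (B * A) (Fin.last (k+1)) j := by
        rw [Matrix.mul_apply]
        refine Finset.sum_congr rfl fun t _ => ?_
        rw [hC, updateRow_self]
      rw [this, Matrix.adjugate_mul]
      simp [Matrix.one_apply]
    · rw [updateRow_ne hil, updateRow_ne hi0]
      have : ∑ t, C i t * A t j = ∑ t, (if i = t then 1 else 0) * A t j := by
        refine Finset.sum_congr rfl fun t _ => ?_
        rw [hC, updateRow_ne hil, updateRow_ne hi0, Matrix.one_apply]
      rw [this]
      simp
  have hdetCA : (C * A).det = A.det * A.det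
      * (A.submatrix (Fin.succ ∘ Fin.castSucc) (Fin.succ ∘ Fin.castSucc)).det := by
    rw [hCA, Matrix.det_updateRow_smul, updateRow_comm' _ h0l, Matrix.det_updateRow_smul,
      updateRow_comm' _ (Ne.symm h0l), det_updateRow_basis]
    ring
  have hdetC : C.det = B 0 0 * B (Fin.last (k+1)) (Fin.last (k+1))
      - B 0 (Fin.last (k+1)) * B (Fin.last (k+1)) 0 := det_one_updateRow_two _ _
  have hB00 : B 0 0 = (A.submatrix Fin.succ Fin.succ).det := by
    rw [hB, Matrix.adjugate_fin_succ_eq_det_submatrix]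
    simp
  have hBll : B (Fin.last (k+1)) (Fin.last (k+1)) = (A.submatrix Fin.castSucc Fin.castSucc).det := by
    rw [hB, Matrix.adjugate_fin_succ_eq_det_submatrix]
    rw [Fin.succAbove_last]
    rw [Even.neg_one_pow ⟨(Fin.last (k+1) : ℕ), rfl⟩, one_mul]
  have hB0l : B 0 (Fin.last (k+1)) = (-1)^(k+1) * (A.submatrix Fin.castSucc Fin.succ).det := by
    rw [hB, Matrix.adjugate_fin_succ_eq_det_submatrix]
    rw [Fin.succAbove_last, Fin.succAbove_zero]
    simp
  have hBl0 : B (Fin.last (k+1)) 0 = (-1)^(k+1) * (A.submatrix Fin.succ Fin.castSucc).det := by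
    rw [hB, Matrix.adjugate_fin_succ_eq_det_submatrix]
    rw [Fin.succAbove_last, Fin.succAbove_zero]
    simp
  have hsign : ((-1 : R)^(k+1)) * ((-1 : R)^(k+1)) = 1 := by
    rw [← pow_add]
    exact Even.neg_one_pow ⟨k+1, rfl⟩
  have hdetC' : C.det = (A.submatrix Fin.succ Fin.succ).det
      * (A.submatrix Fin.castSucc Fin.castSucc).det
      - (A.submatrix Fin.castSucc Fin.succ).det * (A.submatrix Fin.succ Fin.castSucc).det := by
    rw [hdetC, hB00, hBll, hB0l, hBl0]
    linear_combination (-((A.submatrix Fin.castSucc Fin.succ).det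
      * (A.submatrix Fin.succ Fin.castSucc).det)) * hsign
  calc ((A.submatrix Fin.succ Fin.succ).det * (A.submatrix Fin.castSucc Fin.castSucc).det
      - (A.submatrix Fin.castSucc Fin.succ).det * (A.submatrix Fin.succ Fin.castSucc).det) * A.det
      = C.det * A.det := by rw [hdetC']
    _ = (C * A).det := (Matrix.det_mul _ _).symm
    _ = (A.det * (A.submatrix (Fin.succ ∘ Fin.castSucc) (Fin.succ ∘ Fin.castSucc)).det) * A.det := by
        rw [hdetCA]; ring

theorem desnanot_jacobi {k : ℕ} (A : Matrix (Fin (k+2)) (Fin (k+2)) R) :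
    A.det * (A.submatrix (Fin.succ ∘ Fin.castSucc) (Fin.succ ∘ Fin.castSucc)).det
    = (A.submatrix Fin.succ Fin.succ).det * (A.submatrix Fin.castSucc Fin.castSucc).det
      - (A.submatrix Fin.castSucc Fin.succ).det * (A.submatrix Fin.succ Fin.castSucc).det := by
  let A' := mvPolynomialX (Fin (k+2)) (Fin (k+2)) ℤ
  have key : A'.det * (A'.submatrix (Fin.succ ∘ Fin.castSucc) (Fin.succ ∘ Fin.castSucc)).det
      = (A'.submatrix Fin.succ Fin.succ).det * (A'.submatrix Fin.castSucc Fin.castSucc).det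
        - (A'.submatrix Fin.castSucc Fin.succ).det * (A'.submatrix Fin.succ Fin.castSucc).det := by
    apply mul_right_cancel₀ (det_mvPolynomialX_ne_zero (Fin (k+2)) ℤ)
    exact (dj_mul_det A').symm
  let φ : MvPolynomial (Fin (k+2) × Fin (k+2)) ℤ →ₐ[ℤ] R :=
    MvPolynomial.aeval fun p => A p.1 p.2
  have h2 := congrArg φ key
  have hsub : ∀ (r c : Fin (k+1) → Fin (k+2)),
      φ ((A'.submatrix r c).det) = ((φ.mapMatrix A').submatrix r c).det := by
    intro r c
    rw [AlgHom.map_det, AlgHom.mapMatrix_apply, AlgHom.mapMatrix_apply, Matrix.submatrix_map]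
  have hsub' : ∀ (r c : Fin k → Fin (k+2)),
      φ ((A'.submatrix r c).det) = ((φ.mapMatrix A').submatrix r c).det := by
    intro r c
    rw [AlgHom.map_det, AlgHom.mapMatrix_apply, AlgHom.mapMatrix_apply, Matrix.submatrix_map]
  rw [_root_.map_mul, map_sub, _root_.map_mul, _root_.map_mul, AlgHom.map_det, hsub, hsub, hsub, hsub, hsub'] at h2
  rw [mvPolynomialX_mapMatrix_aeval] at h2
  exact h2

end GPwork
section GPwork2

/-- consecutive window map -/
def cm {n : ℕ} (p a : ℕ) (h : a + p ≤ n) : Fin p → Fin n := fun i => ⟨a + i.val, by omega⟩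

lemma cm_strictMono {n p a : ℕ} (h : a + p ≤ n) : StrictMono (cm p a h) := by
  intro i j hij
  simp only [cm, Fin.lt_def] at *
  omega

lemma cm_comp {n p q a c d : ℕ} (h : a + p ≤ n) (r : Fin q → Fin p)
    (hr : ∀ i, (r i : ℕ) = c + (i : ℕ)) (hd : d = a + c) (h' : d + q ≤ n) :
    (cm p a h) ∘ r = cm q d h' := by
  funext i
  simp only [Function.comp_apply, cm, Fin.ext_iff, hr]
  omega

lemma pos_of_mul_pos_right' {x y : ℝ} (h : 0 < x * y) (hy : 0 < y) : 0 < x := by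
  nlinarith

lemma stageA {n m : ℕ} (X : Matrix (Fin n) (Fin m) ℝ)
    (Hcol : ∀ p a, 0 < p → ∀ (h1 : a + p ≤ n) (h2 : 0 + p ≤ m),
      0 < (X.submatrix (cm p a h1) (cm p 0 h2)).det)
    (Hrow : ∀ p b, 0 < p → ∀ (h1 : 0 + p ≤ n) (h2 : b + p ≤ m),
      0 < (X.submatrix (cm p 0 h1) (cm p b h2)).det) :
    ∀ p a b (h1 : a + p ≤ n) (h2 : b + p ≤ m),
      0 < (X.submatrix (cm p a h1) (cm p b h2)).det := by
  suffices H : ∀ s p a b (h1 : a + p ≤ n) (h2 : b + p ≤ m), a + b = s →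
      0 < (X.submatrix (cm p a h1) (cm p b h2)).det by
    exact fun p a b h1 h2 => H (a+b) p a b h1 h2 rfl
  intro s
  induction s using Nat.strong_induction_on with
  | _ s IHs =>
    intro p
    induction p using Nat.strong_induction_on with
    | _ p IHp =>
      intro a b h1 h2 hs
      rcases Nat.eq_zero_or_pos p with rfl | hp
      · have : (X.submatrix (cm 0 a h1) (cm 0 b h2)).det = 1 := Matrix.det_fin_zero
        rw [this]; norm_num
      rcases Nat.eq_zero_or_pos b with rfl | hb
      · exact Hcol p a hp h1 h2
      rcases Nat.eq_zero_or_pos a with rfl | ha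
      · exact Hrow p b hp h1 h2
      obtain ⟨q, rfl⟩ : ∃ q, p = q + 1 := ⟨p - 1, by omega⟩
      have hBr : (a-1) + (q+2) ≤ n := by omega
      have hBc : (b-1) + (q+2) ≤ m := by omega
      set B := X.submatrix (cm (q+2) (a-1) hBr) (cm (q+2) (b-1) hBc) with hBdef
      have hdj := desnanot_jacobi B
      have hvsucc : ∀ i : Fin (q+1), ((Fin.succ i : Fin (q+2)) : ℕ) = 1 + (i : ℕ) := by
        intro i; simp [Fin.val_succ]; omega
      have hvcast : ∀ i : Fin (q+1), ((Fin.castSucc i : Fin (q+2)) : ℕ) = 0 + (i : ℕ) := by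
        intro i; simp
      have hvint : ∀ i : Fin q, (((Fin.succ ∘ Fin.castSucc) i : Fin (q+2)) : ℕ) = 1 + (i : ℕ) := by
        intro i; simp [Fin.val_succ]; omega
      have e1 : B.submatrix Fin.succ Fin.succ = X.submatrix (cm (q+1) a h1) (cm (q+1) b h2) := by
        rw [hBdef, Matrix.submatrix_submatrix, cm_comp hBr Fin.succ hvsucc (by omega) h1,
          cm_comp hBc Fin.succ hvsucc (by omega) h2]
      have hr1 : (a-1) + (q+1) ≤ n := by omega
      have hc1 : (b-1) + (q+1) ≤ m := by omega
      have e2 : B.submatrix Fin.castSucc Fin.castSucc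
          = X.submatrix (cm (q+1) (a-1) hr1) (cm (q+1) (b-1) hc1) := by
        rw [hBdef, Matrix.submatrix_submatrix, cm_comp hBr Fin.castSucc hvcast (by omega) hr1,
          cm_comp hBc Fin.castSucc hvcast (by omega) hc1]
      have e3 : B.submatrix Fin.castSucc Fin.succ
          = X.submatrix (cm (q+1) (a-1) hr1) (cm (q+1) b h2) := by
        rw [hBdef, Matrix.submatrix_submatrix, cm_comp hBr Fin.castSucc hvcast (by omega) hr1,
          cm_comp hBc Fin.succ hvsucc (by omega) h2]
      have e4 : B.submatrix Fin.succ Fin.castSucc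
          = X.submatrix (cm (q+1) a h1) (cm (q+1) (b-1) hc1) := by
        rw [hBdef, Matrix.submatrix_submatrix, cm_comp hBr Fin.succ hvsucc (by omega) h1,
          cm_comp hBc Fin.castSucc hvcast (by omega) hc1]
      have hrq : a + q ≤ n := by omega
      have hcq : b + q ≤ m := by omega
      have e5 : B.submatrix (Fin.succ ∘ Fin.castSucc) (Fin.succ ∘ Fin.castSucc)
          = X.submatrix (cm q a hrq) (cm q b hcq) := by
        rw [hBdef, Matrix.submatrix_submatrix, cm_comp hBr _ hvint (by omega) hrq,
          cm_comp hBc _ hvint (by omega) hcq]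
      rw [e1, e2, e3, e4, e5] at hdj
      have hBpos : 0 < B.det := by
        rw [hBdef]
        exact IHs (a-1+(b-1)) (by omega) (q+2) (a-1) (b-1) hBr hBc rfl
      have hIntpos : 0 < (X.submatrix (cm q a hrq) (cm q b hcq)).det :=
        IHp q (by omega) a b hrq hcq hs
      have hD1 : 0 < (X.submatrix (cm (q+1) (a-1) hr1) (cm (q+1) (b-1) hc1)).det :=
        IHs (a-1+(b-1)) (by omega) (q+1) (a-1) (b-1) hr1 hc1 rfl
      have hD2 : 0 < (X.submatrix (cm (q+1) (a-1) hr1) (cm (q+1) b h2)).det :=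
        IHs (a-1+b) (by omega) (q+1) (a-1) b hr1 h2 rfl
      have hD3 : 0 < (X.submatrix (cm (q+1) a h1) (cm (q+1) (b-1) hc1)).det :=
        IHs (a+(b-1)) (by omega) (q+1) a (b-1) h1 hc1 rfl
      have key : 0 < (X.submatrix (cm (q+1) a h1) (cm (q+1) b h2)).det
          * (X.submatrix (cm (q+1) (a-1) hr1) (cm (q+1) (b-1) hc1)).det := by
        nlinarith [mul_pos hBpos hIntpos, mul_pos hD2 hD3]
      exact pos_of_mul_pos_right' key hD1

/-- prepend a standard basis column -/
noncomputable def ecol {q : ℕ} (W : Matrix (Fin (q+1)) (Fin q) ℝ) (s : Fin (q+1)) :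
    Matrix (Fin (q+1)) (Fin (q+1)) ℝ :=
  Matrix.of fun i j => Fin.cases (if i = s then 1 else 0) (fun j' => W i j') j

@[simp] lemma ecol_zero {q : ℕ} (W : Matrix (Fin (q+1)) (Fin q) ℝ) (s i : Fin (q+1)) :
    ecol W s i 0 = if i = s then 1 else 0 := rfl

@[simp] lemma ecol_succ {q : ℕ} (W : Matrix (Fin (q+1)) (Fin q) ℝ) (s i : Fin (q+1)) (j : Fin q) :
    ecol W s i (Fin.succ j) = W i j := by
  simp [ecol]

lemma det_ecol {q : ℕ} (W : Matrix (Fin (q+1)) (Fin q) ℝ) (s : Fin (q+1)) :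
    (ecol W s).det = (-1)^(s : ℕ) * (W.submatrix s.succAbove id).det := by
  rw [Matrix.det_succ_column_zero, Finset.sum_eq_single s]
  · rw [ecol_zero, if_pos rfl, mul_one]
    congr 1
  · intro i _ hi
    rw [ecol_zero, if_neg hi, mul_zero, zero_mul]
  · intro h; exact absurd (Finset.mem_univ _) h

lemma lemF {p : ℕ} (Y : Matrix (Fin (p+2)) (Fin (p+1)) ℝ) (s : Fin (p+2))
    (hs0 : s ≠ 0) (hsl : s ≠ Fin.last (p+1)) :
    (Y.submatrix s.succAbove id).det * (Y.submatrix (Fin.succ ∘ Fin.castSucc) Fin.castSucc).det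
    = (Y.submatrix Fin.succ id).det
        * (Y.submatrix (Fin.castSucc ∘ (s.castPred hsl).succAbove) Fin.castSucc).det
      + (Y.submatrix (Fin.succ ∘ (s.pred hs0).succAbove) Fin.castSucc).det
        * (Y.submatrix Fin.castSucc id).det := by
  set Z := ecol Y s with hZ
  have hdj := desnanot_jacobi Z
  have z1 : Z.submatrix Fin.succ Fin.succ = Y.submatrix Fin.succ id := by
    funext i j
    simp [hZ, submatrix_apply]
  have z4 : Z.submatrix Fin.castSucc Fin.succ = Y.submatrix Fin.castSucc id := by
    funext i j
    simp [hZ, submatrix_apply]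
  have z5 : Z.submatrix (Fin.succ ∘ Fin.castSucc) (Fin.succ ∘ Fin.castSucc)
      = Y.submatrix (Fin.succ ∘ Fin.castSucc) Fin.castSucc := by
    funext i j
    simp [hZ, submatrix_apply]
  have z2 : Z.submatrix Fin.castSucc Fin.castSucc
      = ecol (Y.submatrix Fin.castSucc Fin.castSucc) (s.castPred hsl) := by
    funext i j
    induction j using Fin.cases with
    | zero =>
      have : Fin.castSucc (0 : Fin (p+1)) = (0 : Fin (p+2)) := rfl
      simp only [hZ, submatrix_apply, this, ecol_zero]
      have hiff : Fin.castSucc i = s ↔ i = s.castPred hsl := by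
        constructor
        · intro h; exact Fin.castSucc_injective _ (by rw [h, Fin.castSucc_castPred])
        · intro h; rw [h, Fin.castSucc_castPred]
      simp [hiff]
    | succ j' =>
      have : Fin.castSucc (Fin.succ j') = Fin.succ (Fin.castSucc j') := by
        apply Fin.ext; simp
      simp only [hZ, submatrix_apply, this, ecol_succ]
  have z3 : Z.submatrix Fin.succ Fin.castSucc
      = ecol (Y.submatrix Fin.succ Fin.castSucc) (s.pred hs0) := by
    funext i j
    induction j using Fin.cases with
    | zero =>
      have : Fin.castSucc (0 : Fin (p+1)) = (0 : Fin (p+2)) := rfl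
      simp only [hZ, submatrix_apply, this, ecol_zero]
      have hiff : Fin.succ i = s ↔ i = s.pred hs0 := by
        constructor
        · intro h; exact Fin.succ_injective _ (by rw [h, Fin.succ_pred])
        · intro h; rw [h, Fin.succ_pred]
      simp [hiff]
    | succ j' =>
      have : Fin.castSucc (Fin.succ j') = Fin.succ (Fin.castSucc j') := by
        apply Fin.ext; simp
      simp only [hZ, submatrix_apply, this, ecol_succ]
  have d0 : Z.det = (-1)^(s:ℕ) * (Y.submatrix s.succAbove id).det := det_ecol Y s
  have d2 : (Z.submatrix Fin.castSucc Fin.castSucc).det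
      = (-1)^(s:ℕ) * (Y.submatrix (Fin.castSucc ∘ (s.castPred hsl).succAbove) Fin.castSucc).det := by
    rw [z2, det_ecol]
    rw [Matrix.submatrix_submatrix, Function.comp_id]
    congr 2
  have d3 : (Z.submatrix Fin.succ Fin.castSucc).det
      = (-1)^((s:ℕ)-1) * (Y.submatrix (Fin.succ ∘ (s.pred hs0).succAbove) Fin.castSucc).det := by
    rw [z3, det_ecol]
    rw [Matrix.submatrix_submatrix, Function.comp_id]
    congr 2
  rw [d0, z1, d2, d3, z4, z5] at hdj
  obtain ⟨w, hw⟩ : ∃ w, (s : ℕ) = w + 1 :=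
    ⟨(s:ℕ) - 1, by have := Fin.pos_iff_ne_zero.mpr hs0; omega⟩
  rw [hw] at hdj
  rw [show w + 1 - 1 = w from rfl] at hdj
  rw [pow_succ] at hdj
  rcases Nat.even_or_odd w with he | ho
  · rw [he.neg_one_pow] at hdj
    linear_combination -hdj
  · rw [ho.neg_one_pow] at hdj
    linear_combination hdj

lemma strictMono_val_le {n q : ℕ} {f : Fin (q+1) → Fin n} (hf : StrictMono f) :
    ∀ (t : ℕ) (j k : Fin (q+1)), (j : ℕ) + t = (k : ℕ) → (f j : ℕ) + t ≤ (f k : ℕ) := by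
  intro t
  induction t with
  | zero =>
    intro j k h
    have : j = k := Fin.ext (by omega)
    subst this; omega
  | succ t ih =>
    intro j k h
    have hk : 0 < (k : ℕ) := by omega
    set k' : Fin (q+1) := ⟨(k : ℕ) - 1, by omega⟩ with hk'
    have h1 := ih j k' (by simp [hk']; omega)
    have h2 : f k' < f k := hf (Fin.lt_def.mpr (by show (k:ℕ) - 1 < k; omega))
    rw [Fin.lt_def] at h2
    omega

lemma lemW {n m q : ℕ} (X : Matrix (Fin n) (Fin m) ℝ) (g : Fin (q+1) → Fin m)
    (H1 : ∀ (f' : Fin q → Fin n) (g' : Fin q → Fin m), StrictMono f' → StrictMono g' →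
      0 < (X.submatrix f' g').det)
    (hg : StrictMono g)
    (H2 : ∀ a (h : a + (q+1) ≤ n), 0 < (X.submatrix (cm (q+1) a h) g).det) :
    ∀ f : Fin (q+1) → Fin n, StrictMono f → 0 < (X.submatrix f g).det := by
  suffices H : ∀ d (f : Fin (q+1) → Fin n), StrictMono f →
      (f (Fin.last q) : ℕ) - (f 0 : ℕ) = d → 0 < (X.submatrix f g).det by
    intro f hf
    exact H _ f hf rfl
  intro d
  induction d using Nat.strong_induction_on with
  | _ d IH =>
    intro f hf hd
    by_cases hcons : ∀ i : Fin (q+1), (f i : ℕ) = (f 0 : ℕ) + (i : ℕ)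
    · -- consecutive rows
      have hb : (f 0 : ℕ) + (q+1) ≤ n := by
        have := (f (Fin.last q)).isLt
        have := hcons (Fin.last q)
        simp [Fin.last] at this
        omega
      have : f = cm (q+1) (f 0 : ℕ) hb := by
        funext i
        exact Fin.ext (by simp [cm, hcons i])
      rw [this]
      exact H2 _ hb
    · push_neg at hcons
      -- least index where f is not packed
      have hex : ∃ k : ℕ, ∃ hk : k < q+1, (f ⟨k, hk⟩ : ℕ) ≠ (f 0 : ℕ) + k := by
        obtain ⟨i, hi⟩ := hcons
        exact ⟨i, i.isLt, by simpa using hi⟩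
      classical
      set v := Nat.find hex with hv
      obtain ⟨hvlt, hvne⟩ := Nat.find_spec hex
      have hmin : ∀ k (hk : k < q+1), k < v → (f ⟨k, hk⟩ : ℕ) = (f 0 : ℕ) + k := by
        intro k hk hklt
        by_contra hne
        exact (Nat.find_min hex hklt) ⟨hk, hne⟩
      have hv0 : 0 < v := by
        rcases Nat.eq_zero_or_pos v with h0 | h0
        · exfalso
          apply hvne
          have e0 : (⟨Nat.find hex, hvlt⟩ : Fin (q+1)) = 0 := Fin.ext (by simp only [Fin.val_mk, Fin.val_zero]; omega)
          rw [e0]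
          omega
        · exact h0
      have hfge : ∀ k (hk : k < q+1), (f 0 : ℕ) + k ≤ (f ⟨k, hk⟩ : ℕ) := by
        intro k hk
        have := strictMono_val_le hf k 0 ⟨k, hk⟩ (by simp)
        omega
      have hgtv : (f 0 : ℕ) + v < (f ⟨v, hvlt⟩ : ℕ) := lt_of_le_of_ne (hfge v hvlt) (Ne.symm hvne)
      set h0 : ℕ := (f 0 : ℕ) + v with hh0
      have hhn : h0 < n := by
        have := (f ⟨v, hvlt⟩).isLt
        omega
      -- the extended row map
      set f' : Fin (q+2) → Fin n := fun j =>
        if hj : (j : ℕ) < v then f ⟨(j : ℕ), by omega⟩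
        else if (j : ℕ) = v then ⟨h0, hhn⟩
        else f ⟨(j : ℕ) - 1, by omega⟩ with hf'
      have hf'lt : ∀ (j : Fin (q+2)) (hj : (j:ℕ) < v), f' j = f ⟨(j:ℕ), by omega⟩ := by
        intro j hj; simp [hf', hj]
      have hf'eqv : ∀ (j : Fin (q+2)), (j:ℕ) = v → f' j = ⟨h0, hhn⟩ := by
        intro j hj; simp [hf', hj]
      have hf'gt : ∀ (j : Fin (q+2)) (hj : v < (j:ℕ)), f' j = f ⟨(j:ℕ) - 1, by omega⟩ := by
        intro j hj
        have h1 : ¬ ((j:ℕ) < v) := by omega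
        have h2 : ¬ ((j:ℕ) = v) := by omega
        simp [hf', h1, h2]
      have hfval : ∀ (a b : Fin (q+1)), (a:ℕ) < (b:ℕ) → (f a : ℕ) < (f b : ℕ) := by
        intro a b hab
        exact hf (by rwa [Fin.lt_def])
      have hf'mono : StrictMono f' := by
        intro a b hab
        rw [Fin.lt_def] at hab
        rw [Fin.lt_def]
        rcases lt_trichotomy (a : ℕ) v with ha | ha | ha
        · rw [hf'lt a ha]
          rcases lt_trichotomy (b : ℕ) v with hb | hb | hb
          · rw [hf'lt b hb]; exact hfval _ _ hab
          · rw [hf'eqv b hb]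
            have := hmin (a:ℕ) (by omega) ha
            simp only [this]
            omega
          · rw [hf'gt b hb]
            have : (a : ℕ) < (b:ℕ) - 1 ∨ (a:ℕ) = (b:ℕ) - 1 := by omega
            rcases this with h | h
            · exact hfval _ _ (by simpa using h)
            · exfalso; omega
        · rw [hf'eqv a ha]
          have hb : v < (b:ℕ) := by omega
          rw [hf'gt b hb]
          have hco : ((⟨h0, hhn⟩ : Fin n) : ℕ) = h0 := rfl
          have hst := strictMono_val_le hf ((b:ℕ)-1-v) ⟨v, hvlt⟩ ⟨(b:ℕ)-1, by omega⟩ (by simp; omega)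
          rw [hco]
          omega
        · have hb : v < (b:ℕ) := by omega
          rw [hf'gt a ha, hf'gt b hb]
          exact hfval _ _ (by simp; omega)
      -- the special position
      set s : Fin (q+2) := ⟨v, by omega⟩ with hs
      have hs0 : s ≠ 0 := by
        simp [hs, Fin.ext_iff]; omega
      have hsl : s ≠ Fin.last (q+1) := by
        simp [hs, Fin.ext_iff, Fin.last]; omega
      have key := lemF (X.submatrix f' g) s hs0 hsl
      -- identify the target piece
      have hcomp : f' ∘ s.succAbove = f := by
        funext i
        simp only [Function.comp_apply]
        rcases lt_or_ge (i : ℕ) v with hi | hi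
        · have h1 : Fin.castSucc i < s := by
            rw [Fin.lt_def]; simpa using hi
          rw [Fin.succAbove_of_castSucc_lt _ _ h1, hf'lt _ (by simpa using hi)]
          exact congrArg f (Fin.ext (by simp))
        · have h1 : s ≤ Fin.castSucc i := by
            rw [Fin.le_def]; simpa using hi
          rw [Fin.succAbove_of_le_castSucc _ _ h1, hf'gt _ (by simp [Fin.val_succ]; omega)]
          exact congrArg f (Fin.ext (by simp [Fin.val_succ]))
      simp only [Matrix.submatrix_submatrix, Function.comp_id, hcomp] at key
      -- lower-order minors are positive by H1
      have hgc : StrictMono (g ∘ Fin.castSucc) := hg.comp Fin.strictMono_castSucc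
      have hApos : 0 < (X.submatrix (f' ∘ (Fin.succ ∘ Fin.castSucc)) (g ∘ Fin.castSucc)).det :=
        H1 _ _ (hf'mono.comp (Fin.strictMono_succ.comp Fin.strictMono_castSucc)) hgc
      have hBpos : 0 < (X.submatrix (f' ∘ (Fin.castSucc ∘ (s.castPred hsl).succAbove))
          (g ∘ Fin.castSucc)).det :=
        H1 _ _ (hf'mono.comp (Fin.strictMono_castSucc.comp (Fin.strictMono_succAbove _))) hgc
      have hCpos : 0 < (X.submatrix (f' ∘ (Fin.succ ∘ (s.pred hs0).succAbove))
          (g ∘ Fin.castSucc)).det :=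
        H1 _ _ (hf'mono.comp (Fin.strictMono_succ.comp (Fin.strictMono_succAbove _))) hgc
      -- the two order-(q+1) minors with smaller spread
      have hlast : (f 0 : ℕ) + q < (f (Fin.last q) : ℕ) := by
        have := strictMono_val_le hf (q - v) ⟨v, hvlt⟩ (Fin.last q) (by simp [Fin.last]; omega)
        omega
      have hP0 : ((f' ∘ Fin.succ) 0 : ℕ) = (f 0 : ℕ) + 1 := by
        simp only [Function.comp_apply]
        have h1 : ((Fin.succ (0 : Fin (q+1))) : ℕ) = 1 := by simp
        rcases lt_trichotomy 1 v with hv1 | hv1 | hv1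
        · rw [hf'lt _ (by omega)]
          have := hmin 1 (by omega) (by omega)
          have e1 : (⟨((Fin.succ (0 : Fin (q+1))) : ℕ), by omega⟩ : Fin (q+1)) = ⟨1, by omega⟩ :=
            Fin.ext (by simp)
          rw [e1]
          omega
        · rw [hf'eqv _ (by omega)]
          simp only []
          omega
        · exfalso; omega
      have hPl : (f' ∘ Fin.succ) (Fin.last q) = f (Fin.last q) := by
        simp only [Function.comp_apply]
        rw [hf'gt _ (by simp [Fin.val_succ]; omega)]
        exact congrArg f (Fin.ext (by simp [Fin.val_succ]))
      have hPpos : 0 < (X.submatrix (f' ∘ Fin.succ) g).det := by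
        refine IH (((f' ∘ Fin.succ) (Fin.last q) : ℕ) - ((f' ∘ Fin.succ) 0 : ℕ)) ?_ _
          (hf'mono.comp Fin.strictMono_succ) rfl
        rw [hP0, hPl]
        omega
      have hQ0 : (f' ∘ Fin.castSucc) 0 = f 0 := by
        simp only [Function.comp_apply]
        rw [show Fin.castSucc (0 : Fin (q+1)) = (0 : Fin (q+2)) from rfl, hf'lt _ (by simp; omega)]
        exact congrArg f (Fin.ext (by simp))
      have hQl : ((f' ∘ Fin.castSucc) (Fin.last q) : ℕ) < (f (Fin.last q) : ℕ) := by
        simp only [Function.comp_apply]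
        have hcl : ((Fin.castSucc (Fin.last q)) : ℕ) = q := by simp [Fin.last]
        rcases lt_trichotomy q v with hqv | hqv | hqv
        · exfalso; omega
        · rw [hf'eqv _ (by omega)]
          simp only []
          omega
        · rw [hf'gt _ (by omega)]
          have : (⟨((Fin.castSucc (Fin.last q)) : ℕ) - 1, by omega⟩ : Fin (q+1)) = ⟨q - 1, by omega⟩ :=
            Fin.ext (by simp [Fin.last])
          rw [this]
          have := hfval ⟨q - 1, by omega⟩ (Fin.last q) (by simp [Fin.last]; omega)
          omega
      have hQpos : 0 < (X.submatrix (f' ∘ Fin.castSucc) g).det := by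
        refine IH (((f' ∘ Fin.castSucc) (Fin.last q) : ℕ) - ((f' ∘ Fin.castSucc) 0 : ℕ)) ?_ _
          (hf'mono.comp Fin.strictMono_castSucc) rfl
        rw [hQ0]
        omega
      have hsum : 0 < (X.submatrix (f' ∘ Fin.succ) g).det
          * (X.submatrix (f' ∘ (Fin.castSucc ∘ (s.castPred hsl).succAbove)) (g ∘ Fin.castSucc)).det
          + (X.submatrix (f' ∘ (Fin.succ ∘ (s.pred hs0).succAbove)) (g ∘ Fin.castSucc)).det
          * (X.submatrix (f' ∘ Fin.castSucc) g).det :=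
        add_pos (mul_pos hPpos hBpos) (mul_pos hCpos hQpos)
      rw [← key] at hsum
      exact pos_of_mul_pos_right' hsum hApos

lemma main_pos {n m : ℕ} (X : Matrix (Fin n) (Fin m) ℝ)
    (Hcol : ∀ p a, 0 < p → ∀ (h1 : a + p ≤ n) (h2 : 0 + p ≤ m),
      0 < (X.submatrix (cm p a h1) (cm p 0 h2)).det)
    (Hrow : ∀ p b, 0 < p → ∀ (h1 : 0 + p ≤ n) (h2 : b + p ≤ m),
      0 < (X.submatrix (cm p 0 h1) (cm p b h2)).det) :
    ∀ (j : ℕ) (f : Fin j → Fin n) (g : Fin j → Fin m), StrictMono f → StrictMono g →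
      0 < (X.submatrix f g).det := by
  have SA := stageA X Hcol Hrow
  intro j
  induction j using Nat.strong_induction_on with
  | _ j IHj =>
    intro f g hf hg
    rcases j with _ | q
    · have : (X.submatrix f g).det = 1 := Matrix.det_fin_zero
      rw [this]; norm_num
    · have H1 : ∀ (f' : Fin q → Fin n) (g' : Fin q → Fin m), StrictMono f' → StrictMono g' →
          0 < (X.submatrix f' g').det := fun f' g' h1 h2 => IHj q (by omega) f' g' h1 h2
      -- step 1 : arbitrary rows, consecutive columns
      have step1 : ∀ b (hb : b + (q+1) ≤ m) (f' : Fin (q+1) → Fin n), StrictMono f' →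
          0 < (X.submatrix f' (cm (q+1) b hb)).det := by
        intro b hb f' hf'
        exact lemW X (cm (q+1) b hb) H1 (cm_strictMono hb)
          (fun a ha => SA (q+1) a b ha hb) f' hf'
      -- step 2 : apply lemW to the transpose
      have H1t : ∀ (f' : Fin q → Fin m) (g' : Fin q → Fin n), StrictMono f' → StrictMono g' →
          0 < (Xᵀ.submatrix f' g').det := by
        intro f' g' h1 h2
        rw [← Matrix.transpose_submatrix, Matrix.det_transpose]
        exact H1 g' f' h2 h1
      have H2t : ∀ a (ha : a + (q+1) ≤ m), 0 < (Xᵀ.submatrix (cm (q+1) a ha) f).det := by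
        intro a ha
        rw [← Matrix.transpose_submatrix, Matrix.det_transpose]
        exact step1 a ha f hf
      have := lemW Xᵀ f H1t hf H2t g hg
      rwa [← Matrix.transpose_submatrix, Matrix.det_transpose] at this

end GPwork2

/-- `X` is strictly totally positive iff all of its row-initial and
column-initial minors are positive. -/
theorem stmt6 {n m : ℕ} (X : Matrix (Fin n) (Fin m) ℝ) :
    STP X ↔
      ∀ j : ℕ, 1 ≤ j → j ≤ min n m → ∀ t : ℕ, 1 ≤ t →
        (∀ (f : Fin j → Fin n) (g : Fin j → Fin m),
          (∀ i, (f i : ℕ) = t - 1 + (i : ℕ)) → (∀ i, (g i : ℕ) = (i : ℕ)) →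
          0 < (X.submatrix f g).det) ∧
        (∀ (f : Fin j → Fin n) (g : Fin j → Fin m),
          (∀ i, (f i : ℕ) = (i : ℕ)) → (∀ i, (g i : ℕ) = t - 1 + (i : ℕ)) →
          0 < (X.submatrix f g).det) := by
  constructor
  · intro hSTP j hj1 hjmin t ht
    constructor
    · intro f g hfv hgv
      refine hSTP j f g ?_ ?_
      · intro a b hab
        rw [Fin.lt_def] at hab ⊢
        rw [hfv a, hfv b]
        omega
      · intro a b hab
        rw [Fin.lt_def] at hab ⊢
        rw [hgv a, hgv b]
        omega
    · intro f g hfv hgv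
      refine hSTP j f g ?_ ?_
      · intro a b hab
        rw [Fin.lt_def] at hab ⊢
        rw [hfv a, hfv b]
        omega
      · intro a b hab
        rw [Fin.lt_def] at hab ⊢
        rw [hgv a, hgv b]
        omega
  · intro H
    refine main_pos X ?_ ?_
    · intro p a hp h1 h2
      exact (H p hp (le_min (by omega) (by omega)) (a+1) (by omega)).1
        (cm p a h1) (cm p 0 h2)
        (fun i => by simp only [cm]; omega) (fun i => by simp [cm])
    · intro p b hp h1 h2
      exact (H p hp (le_min (by omega) (by omega)) (b+1) (by omega)).2
        (cm p 0 h1) (cm p b h2)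
        (fun i => by simp [cm]) (fun i => by simp only [cm]; omega)
end

section
/- Let X be a real n×m matrix with n ≥ 2m and suppose there exists ε ∈ {−1,+1} such that: ε·det(X_{α,(1:m)}) > 0 for all α = {1,…,m−r} ∪ {t,…,t+r−1} with 1 ≤ r < m and m−r+1 ≤ t ≤ n−r+1, and for all α = {t,…,t+m−1} with 1 ≤ t ≤ m; and ε·det(X_{α,(1:m)}) ≥ 0 for all α = {t,…,t+m−1} with m+1 ≤ t ≤ n−m+1. Then X is m-sign consistent. -/
open Matrix Polynomial Filter

namespace Stmt8Aux

noncomputable def mnr (z : ℕ → ℕ → ℝ) {μ : ℕ} (f : Fin μ → ℕ) : ℝ :=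
  (Matrix.of fun i j : Fin μ => z (f i) (j : ℕ)).det

noncomputable def cofac {μ : ℕ} (R : Fin μ → Fin (μ+1) → ℝ) (j : Fin (μ+1)) : ℝ :=
  (-1 : ℝ) ^ (j : ℕ) * (Matrix.of (fun r s => R r (j.succAbove s))).det

lemma det_cons_expand {μ : ℕ} (v : Fin (μ+1) → ℝ) (R : Fin μ → Fin (μ+1) → ℝ) :
    (Matrix.of (Fin.cons v R)).det = ∑ j, v j * cofac R j := by
  rw [Matrix.det_succ_row_zero]
  refine Finset.sum_congr rfl fun j _ => ?_
  have : ((Matrix.of (Fin.cons v R)).submatrix Fin.succ j.succAbove)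
      = Matrix.of (fun r s => R r (j.succAbove s)) := by
    ext r s
    simp [Matrix.submatrix_apply, Fin.cons_succ]
  rw [this]
  simp only [Matrix.of_apply, Fin.cons_zero, cofac]
  ring

lemma pluecker {μ : ℕ} (c : Fin μ → ℝ) (a : Fin (μ+1) → Fin μ → ℝ) :
    ∑ i : Fin (μ+1), (-1:ℝ)^(i:ℕ) * (∑ j, a i j * c j) *
      (Matrix.of (fun r s : Fin μ => a (i.succAbove r) s)).det = 0 := by
  set M : Matrix (Fin (μ+1)) (Fin (μ+1)) ℝ :=
    Matrix.of (fun i => Fin.snoc (a i) (∑ j, a i j * c j)) with hM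
  have hdet : M.det = 0 := by
    rw [← Matrix.exists_mulVec_eq_zero_iff]
    refine ⟨Fin.snoc c (-1), ?_, ?_⟩
    · intro h
      have := congr_fun h (Fin.last μ)
      simp [Fin.snoc_last] at this
    · funext i
      simp only [Matrix.mulVec, dotProduct, hM, Matrix.of_apply, Pi.zero_apply]
      rw [Fin.sum_univ_castSucc]
      simp only [Fin.snoc_castSucc, Fin.snoc_last]
      ring
  have hexp := Matrix.det_succ_column M (Fin.last μ)
  rw [hdet] at hexp
  have hterm : ∀ i : Fin (μ+1),
      (-1:ℝ)^((i:ℕ) + ((Fin.last μ):ℕ)) * M i (Fin.last μ) *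
        (M.submatrix i.succAbove (Fin.last μ).succAbove).det
      = (-1:ℝ)^μ * ((-1:ℝ)^(i:ℕ) * (∑ j, a i j * c j) *
          (Matrix.of (fun r s : Fin μ => a (i.succAbove r) s)).det) := by
    intro i
    have h1 : M.submatrix i.succAbove (Fin.last μ).succAbove
        = Matrix.of (fun r s : Fin μ => a (i.succAbove r) s) := by
      ext r s
      simp [Matrix.submatrix_apply, Fin.succAbove_last, hM, Fin.snoc_castSucc]
    have h2 : M i (Fin.last μ) = ∑ j, a i j * c j := by simp [hM, Fin.snoc_last]
    rw [h1, h2, Fin.val_last, pow_add]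
    ring
  have := hexp
  rw [Finset.sum_congr rfl (fun i _ => hterm i), ← Finset.mul_sum] at this
  have hne : ((-1:ℝ)^μ) ≠ 0 := by positivity
  exact (mul_eq_zero.mp this.symm).resolve_left hne

lemma det_cons_eq_sign_snoc {μ : ℕ} (v : Fin (μ+1) → ℝ) (R : Fin μ → Fin (μ+1) → ℝ) :
    (Matrix.of (Fin.cons v R)).det = (-1:ℝ)^μ * (Matrix.of (Fin.snoc R v)).det := by
  have h : ((Matrix.of (Fin.snoc R v) : Matrix (Fin (μ+1)) (Fin (μ+1)) ℝ).submatrix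
      ((Fin.cycleRange (Fin.last μ)).symm : Equiv.Perm (Fin (μ+1))) id)
      = Matrix.of (Fin.cons v R) := by
    ext i j
    refine Fin.cases ?_ (fun k => ?_) i
    · simp only [Matrix.submatrix_apply, id_eq, Fin.cycleRange_symm_zero, Fin.snoc_last,
        Matrix.of_apply, Fin.cons_zero]
    · simp only [Matrix.submatrix_apply, id_eq, Fin.cycleRange_symm_succ, Fin.succAbove_last,
        Fin.snoc_castSucc, Matrix.of_apply, Fin.cons_succ]
  have hdp := Matrix.det_permute ((Fin.cycleRange (Fin.last μ)).symm)
      (Matrix.of (Fin.snoc R v) : Matrix (Fin (μ+1)) (Fin (μ+1)) ℝ)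
  rw [h] at hdp
  rw [hdp]
  norm_num [Equiv.Perm.sign_symm, Fin.sign_cycleRange]

lemma rel {ν : ℕ} (z : ℕ → ℕ → ℝ) (f : Fin (ν+1) → ℕ) (g : Fin ν → ℕ) (hν : ν ≠ 0)
    (hmid : ∀ j : Fin (ν+1), j ≠ 0 → j ≠ Fin.last ν → ∃ k : Fin ν, g k = f j) :
    mnr z (Fin.cons 0 g) * mnr z f
      = mnr z (Fin.cons 0 (f ∘ Fin.succ)) * mnr z (Fin.cons (f 0) g)
        + mnr z (Fin.cons 0 (f ∘ Fin.castSucc)) * mnr z (Fin.snoc g (f (Fin.last ν))) := by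
  classical
  set zrow : ℕ → Fin (ν+1) → ℝ := fun t j => z t (j : ℕ) with hzrow
  set G : Fin ν → Fin (ν+1) → ℝ := fun k => zrow (g k) with hG
  set a : Fin (ν+2) → Fin (ν+1) → ℝ :=
    Fin.cons (zrow 0) (fun i : Fin (ν+1) => zrow (f i)) with ha
  -- helper: mnr as det of cons matrices
  have hm : ∀ (x : ℕ) (β : Fin ν → ℕ),
      (Matrix.of (Fin.cons (zrow x) (fun k => zrow (β k)))).det = mnr z (Fin.cons x β) := by
    intro x β
    unfold mnr
    congr 1
    ext i j
    refine Fin.cases ?_ (fun k => ?_) i <;> simp [hzrow]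
  have key := pluecker (cofac G) a
  set T : Fin (ν+2) → ℝ := fun i => (-1:ℝ)^(i:ℕ) * (∑ j, a i j * cofac G j) *
      (Matrix.of (fun r s : Fin (ν+1) => a (i.succAbove r) s)).det with hT
  -- Φ values
  have hPhi : ∀ i : Fin (ν+2), (∑ j, a i j * cofac G j)
      = (Matrix.of (Fin.cons (a i) G)).det := fun i => (det_cons_expand (a i) G).symm
  -- term i = 0
  have hT0 : T 0 = mnr z (Fin.cons 0 g) * mnr z f := by
    have hD0 : (Matrix.of (fun r s : Fin (ν+1) => a ((0:Fin (ν+2)).succAbove r) s)).det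
        = mnr z f := by
      unfold mnr
      refine congrArg Matrix.det ?_
      try rfl
      try (ext r s; simp [ha, Fin.succAbove_zero])
    have hP0 : (Matrix.of (Fin.cons (a 0) G)).det = mnr z (Fin.cons 0 g) := by
      simpa [ha] using hm 0 g
    simp only [hT, Fin.val_zero, pow_zero, one_mul, hPhi, hD0, hP0]
  -- middle terms vanish
  have hTmid : ∀ j : Fin (ν+1), j ≠ 0 → j ≠ Fin.last ν → T j.succ = 0 := by
    intro j hj0 hjl
    obtain ⟨k, hk⟩ := hmid j hj0 hjl
    have : (∑ jj, a j.succ jj * cofac G jj) = 0 := by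
      rw [hPhi]
      apply Matrix.det_zero_of_row_eq (i := 0) (j := k.succ) (Fin.succ_ne_zero k).symm
      funext s
      simp [ha, Fin.cons_succ, hG, hk]
    simp [hT, this]
  -- term i = 1
  have hT1 : T ((0 : Fin (ν+1)).succ)
      = -(mnr z (Fin.cons 0 (f ∘ Fin.succ)) * mnr z (Fin.cons (f 0) g)) := by
    have hD : (Matrix.of (fun r s : Fin (ν+1) => a (((0:Fin (ν+1)).succ).succAbove r) s)).det
        = mnr z (Fin.cons 0 (f ∘ Fin.succ)) := by
      rw [← hm 0 (f ∘ Fin.succ)]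
      congr 1; ext r s
      refine Fin.cases ?_ (fun rr => ?_) r
      · simp [ha]
      · simp [ha, Fin.succ_succAbove_succ, Fin.succAbove_zero, Function.comp]
    have hP : (∑ jj, a ((0:Fin (ν+1)).succ) jj * cofac G jj) = mnr z (Fin.cons (f 0) g) := by
      rw [hPhi]
      simpa [ha] using hm (f 0) g
    simp only [hT, hD, hP, Fin.val_succ, Fin.val_zero, pow_one, pow_succ, pow_zero, one_mul]
    ring
  -- term i = last.succ
  have hTlast : T ((Fin.last ν).succ)
      = -(mnr z (Fin.cons 0 (f ∘ Fin.castSucc)) * mnr z (Fin.snoc g (f (Fin.last ν)))) := by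
    have hD : (Matrix.of (fun r s : Fin (ν+1) => a (((Fin.last ν).succ).succAbove r) s)).det
        = mnr z (Fin.cons 0 (f ∘ Fin.castSucc)) := by
      rw [← hm 0 (f ∘ Fin.castSucc)]
      congr 1; ext r s
      refine Fin.cases ?_ (fun rr => ?_) r
      · simp [ha]
      · have h1 : ((Fin.last ν).succ).succAbove rr.succ = (rr.castSucc).succ := by
          rw [Fin.succ_succAbove_succ, Fin.succAbove_last]
        simp only [Matrix.of_apply, h1, ha, Fin.cons_succ, Function.comp_apply]
    have hP : (∑ jj, a ((Fin.last ν).succ) jj * cofac G jj)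
        = (-1:ℝ)^ν * mnr z (Fin.snoc g (f (Fin.last ν))) := by
      rw [hPhi]
      have hcs : a ((Fin.last ν).succ) = zrow (f (Fin.last ν)) := by
        rw [ha]; exact Fin.cons_succ _ _ _
      rw [hcs, det_cons_eq_sign_snoc]
      congr 1
      unfold mnr
      congr 1
      ext i j
      refine Fin.lastCases ?_ (fun k => ?_) i
      · simp [Fin.snoc_last, hzrow]
      · simp [Fin.snoc_castSucc, hG, hzrow]
    have hsign : ((-1:ℝ)^(((Fin.last ν).succ : Fin (ν+2)):ℕ)) = (-1:ℝ)^(ν+1) := by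
      norm_num
    simp only [hT, hD, hP, hsign]
    have hs : ((-1:ℝ)^(ν+1)) * ((-1:ℝ)^ν) = -1 := by
      rw [← pow_add]
      exact Odd.neg_one_pow ⟨ν, by ring⟩
    linear_combination (mnr z (Fin.snoc g (f (Fin.last ν)))
      * mnr z (Fin.cons 0 (f ∘ Fin.castSucc))) * hs
  -- assemble
  have hlne : Fin.last ν ≠ (0 : Fin (ν+1)) := by
    simp [Fin.ext_iff, hν]
  have hsum : Finset.univ.sum T
      = T 0 + (T ((0:Fin (ν+1)).succ) + T ((Fin.last ν).succ)) := by
    rw [Fin.sum_univ_succ]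
    congr 1
    rw [← Finset.add_sum_erase _ (fun j : Fin (ν+1) => T j.succ) (Finset.mem_univ 0)]
    congr 1
    rw [Finset.sum_eq_single_of_mem (Fin.last ν)
      (Finset.mem_erase.mpr ⟨hlne, Finset.mem_univ _⟩)]
    intro b hb hbne
    exact hTmid b (Finset.mem_erase.mp hb).1 hbne
  rw [hsum, hT0, hT1, hTlast] at key
  linarith

lemma strictMono_cons {ν : ℕ} {x : ℕ} {g : Fin ν → ℕ} (hg : StrictMono g)
    (hx : ∀ k, x < g k) : StrictMono (Fin.cons x g : Fin (ν+1) → ℕ) := by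
  intro i i' h
  rcases Fin.eq_zero_or_eq_succ i with rfl | ⟨k, rfl⟩ <;>
    rcases Fin.eq_zero_or_eq_succ i' with rfl | ⟨k', rfl⟩
  · exact absurd h (lt_irrefl _)
  · simpa using hx k'
  · exact absurd h (by simp [Fin.lt_def])
  · simpa using hg (by simpa [Fin.succ_lt_succ_iff] using h)

lemma strictMono_snoc {ν : ℕ} {x : ℕ} {g : Fin ν → ℕ} (hg : StrictMono g)
    (hx : ∀ k, g k < x) : StrictMono (Fin.snoc g x : Fin (ν+1) → ℕ) := by
  intro i i' h
  rcases Fin.eq_castSucc_or_eq_last i with ⟨k, rfl⟩ | rfl <;>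
    rcases Fin.eq_castSucc_or_eq_last i' with ⟨k', rfl⟩ | rfl
  · simpa using hg (by simpa [Fin.castSucc_lt_castSucc_iff] using h)
  · simpa using hx k
  · exact absurd h (by simp [Fin.lt_def, Nat.lt_succ_iff, Fin.is_le])
  · exact absurd h (lt_irrefl _)

lemma mono_nat {ν : ℕ} {f : Fin (ν+1) → ℕ} (hf : StrictMono f) :
    ∀ (a b : ℕ) (h : a + b < ν + 1), f ⟨a, by omega⟩ + b ≤ f ⟨a + b, h⟩ := by
  intro a b
  induction b with
  | zero => intro h; simp
  | succ b ih =>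
    intro h
    have h2 : a + b < ν + 1 := by omega
    have h3 := ih h2
    have hlt : f ⟨a+b, h2⟩ < f ⟨a+(b+1), h⟩ := hf (by simp [Fin.lt_def])
    omega

lemma mono_low {ν : ℕ} {f : Fin (ν+1) → ℕ} (hf : StrictMono f) (i : Fin (ν+1)) :
    f 0 + (i:ℕ) ≤ f i := by
  have h := mono_nat hf 0 (i:ℕ) (by omega)
  have e1 : (⟨0, by omega⟩ : Fin (ν+1)) = 0 := rfl
  have e2 : (⟨0 + (i:ℕ), by omega⟩ : Fin (ν+1)) = i := by
    apply Fin.ext; simp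
  rwa [e1, e2] at h

lemma mono_high {ν : ℕ} {f : Fin (ν+1) → ℕ} (hf : StrictMono f) (i : Fin (ν+1)) :
    f i + (ν - (i:ℕ)) ≤ f (Fin.last ν) := by
  have hilt := i.isLt
  have h := mono_nat hf (i:ℕ) (ν - (i:ℕ)) (by omega)
  have e1 : (⟨(i:ℕ), by omega⟩ : Fin (ν+1)) = i := Fin.ext rfl
  have e2 : (⟨(i:ℕ) + (ν - (i:ℕ)), by omega⟩ : Fin (ν+1)) = Fin.last ν :=
    Fin.ext (by simp only [Fin.val_last]; omega)
  rwa [e1, e2] at h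

lemma step {ν N : ℕ} (z : ℕ → ℕ → ℝ) (f : Fin (ν+1) → ℕ) (hf : StrictMono f)
    (hfN : ∀ i, f i < N) (hf0 : 1 ≤ f 0) (p : Fin ν) (hp : f p.castSucc + 1 < f p.succ)
    (ha : ∀ β : Fin ν → ℕ, StrictMono β → (∀ k, 1 ≤ β k) → (∀ k, β k < N) →
      0 < mnr z (Fin.cons 0 β)) :
    ∃ A B : Fin (ν+1) → ℕ, ∃ P Q R : ℝ,
      StrictMono A ∧ (∀ i, A i < N) ∧ StrictMono B ∧ (∀ i, B i < N) ∧
      A 0 = f 0 ∧ A (Fin.last ν) < f (Fin.last ν) ∧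
      f 0 < B 0 ∧ B (Fin.last ν) = f (Fin.last ν) ∧
      0 < P ∧ 0 < Q ∧ 0 < R ∧
      P * mnr z f = Q * mnr z A + R * mnr z B := by
  classical
  have hν : ν ≠ 0 := by have := p.isLt; omega
  haveI : NeZero ν := ⟨hν⟩
  set w := f p.castSucc + 1 with hw
  set g : Fin ν → ℕ := fun j =>
    if (j:ℕ) < (p:ℕ) then f j.succ else if (j:ℕ) = (p:ℕ) then w else f j.castSucc with hgdef
  have hglt : ∀ j : Fin ν, (j:ℕ) < (p:ℕ) → g j = f j.succ := by
    intro j h; simp only [hgdef]; rw [if_pos h]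
  have hgeq : ∀ j : Fin ν, (j:ℕ) = (p:ℕ) → g j = w := by
    intro j h; simp only [hgdef]; rw [if_neg (by omega), if_pos h]
  have hggt : ∀ j : Fin ν, (p:ℕ) < (j:ℕ) → g j = f j.castSucc := by
    intro j h; simp only [hgdef]; rw [if_neg (by omega), if_neg (by omega)]
  have hfm : ∀ u v : Fin (ν+1), (u:ℕ) < (v:ℕ) → f u < f v := by
    intro u v h; exact hf (by rwa [Fin.lt_def])
  have hfle : ∀ u v : Fin (ν+1), (u:ℕ) ≤ (v:ℕ) → f u ≤ f v := by
    intro u v h; exact hf.monotone (by rwa [Fin.le_def])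
  -- strict monotonicity of g
  have hgm : StrictMono g := by
    intro j k hjk
    have hjk' : (j:ℕ) < (k:ℕ) := hjk
    rcases lt_trichotomy ((j:ℕ)) ((p:ℕ)) with hj | hj | hj <;>
      rcases lt_trichotomy ((k:ℕ)) ((p:ℕ)) with hk | hk | hk
    · rw [hglt j hj, hglt k hk]
      exact hfm _ _ (by simp only [Fin.val_succ]; omega)
    · rw [hglt j hj, hgeq k hk]
      have := hfle j.succ p.castSucc (by simp only [Fin.val_succ, Fin.coe_castSucc]; omega)
      omega
    · rw [hglt j hj, hggt k hk]
      exact hfm _ _ (by simp only [Fin.val_succ, Fin.coe_castSucc]; omega)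
    · omega
    · omega
    · rw [hgeq j hj, hggt k hk]
      have := hfle p.succ k.castSucc (by simp only [Fin.val_succ, Fin.coe_castSucc]; omega)
      omega
    · omega
    · omega
    · rw [hggt j hj, hggt k hk]
      exact hfm _ _ (by simp only [Fin.coe_castSucc]; omega)
  -- entry bounds for g
  have hg1 : ∀ k, 1 ≤ g k := by
    intro k
    rcases lt_trichotomy ((k:ℕ)) ((p:ℕ)) with h | h | h
    · rw [hglt k h]; have := hfle 0 k.succ (by simp only [Fin.val_zero]; omega); omega
    · rw [hgeq k h]; omega
    · rw [hggt k h]; have := hfle 0 k.castSucc (by simp only [Fin.val_zero]; omega); omega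
  have hgN : ∀ k, g k < N := by
    intro k
    rcases lt_trichotomy ((k:ℕ)) ((p:ℕ)) with h | h | h
    · rw [hglt k h]; exact hfN _
    · rw [hgeq k h]; have := hfN p.succ; omega
    · rw [hggt k h]; exact hfN _
  have hg0 : f 0 < g 0 := by
    rcases Nat.eq_zero_or_pos (p:ℕ) with hp0 | hp0
    · rw [hgeq 0 (by simp only [Fin.val_zero]; omega)]
      have : f p.castSucc = f 0 := by
        congr 1
        exact Fin.ext (by simp only [Fin.coe_castSucc, Fin.val_zero]; omega)
      omega
    · rw [hglt 0 (by simp only [Fin.val_zero]; omega)]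
      exact hfm 0 _ (by simp only [Fin.val_zero, Fin.val_succ]; omega)
  -- middle rows of f occur in g
  have hmid : ∀ j : Fin (ν+1), j ≠ 0 → j ≠ Fin.last ν → ∃ k : Fin ν, g k = f j := by
    intro j hj0 hjl
    have hj0' : 0 < (j:ℕ) := by
      rcases Nat.eq_zero_or_pos (j:ℕ) with h | h
      · exact absurd (Fin.ext h : j = 0) hj0
      · exact h
    have hjl' : (j:ℕ) < ν := by
      have h1 := j.isLt
      have : (j:ℕ) ≠ ν := fun h => hjl (Fin.ext (by simp [h]))
      omega
    rcases Nat.lt_or_ge ((j:ℕ)) ((p:ℕ)+1) with hle | hgt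
    · refine ⟨⟨(j:ℕ)-1, by omega⟩, ?_⟩
      rw [hglt _ (by simp only []; omega)]
      exact congrArg f (Fin.ext (by simp only [Fin.val_succ]; omega))
    · refine ⟨⟨(j:ℕ), hjl'⟩, ?_⟩
      rw [hggt _ (by simp only []; omega)]
      exact congrArg f (Fin.ext (by simp only [Fin.coe_castSucc]))
  -- the two smaller tuples
  set A : Fin (ν+1) → ℕ := Fin.cons (f 0) g with hA
  set B : Fin (ν+1) → ℕ := Fin.snoc g (f (Fin.last ν)) with hB
  have hzerole : ∀ k : Fin ν, (0 : Fin ν) ≤ k := fun k => Fin.zero_le k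
  have hAm : StrictMono A := strictMono_cons hgm
    (fun k => lt_of_lt_of_le hg0 (hgm.monotone (hzerole k)))
  have hglast : ∀ k : Fin ν, g k < f (Fin.last ν) := by
    intro k
    rcases lt_trichotomy ((k:ℕ)) ((p:ℕ)) with h | h | h
    · rw [hglt k h]
      exact lt_of_le_of_lt
        (hfle _ p.castSucc (by simp only [Fin.val_succ, Fin.coe_castSucc]; omega))
        (lt_of_lt_of_le (by omega : f p.castSucc < f p.succ)
          (hfle p.succ (Fin.last ν)
            (by simp only [Fin.val_succ, Fin.val_last]; have := p.isLt; omega)))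
    · rw [hgeq k h]
      have h2 := hfle p.succ (Fin.last ν)
        (by simp only [Fin.val_succ, Fin.val_last]; have := p.isLt; omega)
      omega
    · rw [hggt k h]
      exact hfm _ _ (by simp only [Fin.coe_castSucc, Fin.val_last]; have := k.isLt; omega)
  have hBm : StrictMono B := strictMono_snoc hgm hglast
  have hAN : ∀ i, A i < N := by
    intro i
    rcases Fin.eq_zero_or_eq_succ i with rfl | ⟨k, rfl⟩
    · simpa [hA] using hfN 0
    · simpa [hA] using hgN k
  have hBN : ∀ i, B i < N := by
    intro i
    rcases Fin.eq_castSucc_or_eq_last i with ⟨k, rfl⟩ | rfl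
    · simpa [hB] using hgN k
    · simpa [hB] using hfN (Fin.last ν)
  have hA0 : A 0 = f 0 := by simp [hA]
  have hAlast : A (Fin.last ν) < f (Fin.last ν) := by
    have hlast : Fin.last ν = Fin.succ (⟨ν-1, by omega⟩ : Fin ν) := by
      exact Fin.ext (by simp only [Fin.val_last, Fin.val_succ]; omega)
    calc A (Fin.last ν) = g ⟨ν-1, by omega⟩ := by rw [hA, hlast, Fin.cons_succ]
    _ < f (Fin.last ν) := hglast _
  have hB0 : f 0 < B 0 := by
    have h0 : (0 : Fin (ν+1)) = Fin.castSucc (⟨0, by omega⟩ : Fin ν) := by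
      exact Fin.ext (by simp only [Fin.val_zero, Fin.coe_castSucc])
    rw [hB, h0, Fin.snoc_castSucc]
    exact lt_of_lt_of_le hg0 (hgm.monotone (hzerole _))
  have hBlast : B (Fin.last ν) = f (Fin.last ν) := by simp [hB]
  -- positivity of the coefficients
  have hP : 0 < mnr z (Fin.cons 0 g) := ha g hgm hg1 hgN
  have hQ : 0 < mnr z (Fin.cons 0 (f ∘ Fin.succ)) := by
    apply ha
    · exact hf.comp Fin.strictMono_succ
    · intro k
      show 1 ≤ f k.succ
      have := hfm 0 k.succ (by simp only [Fin.val_zero, Fin.val_succ]; omega)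
      omega
    · intro k; exact hfN _
  have hR : 0 < mnr z (Fin.cons 0 (f ∘ Fin.castSucc)) := by
    apply ha
    · exact hf.comp Fin.strictMono_castSucc
    · intro k
      show 1 ≤ f k.castSucc
      have := hfle 0 k.castSucc (by simp only [Fin.val_zero, Fin.coe_castSucc]; omega)
      omega
    · intro k; exact hfN _
  refine ⟨A, B, mnr z (Fin.cons 0 g), mnr z (Fin.cons 0 (f ∘ Fin.succ)),
    mnr z (Fin.cons 0 (f ∘ Fin.castSucc)), hAm, hAN, hBm, hBN, hA0, hAlast, hB0, hBlast,
    hP, hQ, hR, ?_⟩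
  exact rel z f g hν hmid

section WA
variable {ν N : ℕ} (z : ℕ → ℕ → ℝ)

lemma tail_facts {f : Fin (ν+1) → ℕ} (hf : StrictMono f) (hN : ∀ i, f i < N)
    (hf0 : f 0 = 0) :
    mnr z f = mnr z (Fin.cons 0 (Fin.tail f)) ∧ StrictMono (Fin.tail f) ∧
      (∀ k, 1 ≤ Fin.tail f k) ∧ (∀ k, Fin.tail f k < N) := by
  refine ⟨?_, ?_, ?_, ?_⟩
  · have hfe : f = Fin.cons 0 (Fin.tail f) := by
      have h := Fin.cons_self_tail f
      rw [hf0] at h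
      exact h.symm
    conv_lhs => rw [hfe]
  · intro a b h
    exact hf (Fin.succ_lt_succ_iff.mpr h)
  · intro k
    have : f 0 < f k.succ := hf (Fin.succ_pos k)
    simp only [Fin.tail]
    omega
  · intro k
    exact hN _
lemma gap_exists {f : Fin (ν+1) → ℕ} (hf : StrictMono f)
    (hcons : ¬ ∀ i : Fin (ν+1), f i = f 0 + (i:ℕ)) :
    (f 0 + ν < f (Fin.last ν)) ∧ ∃ p : Fin ν, f p.castSucc + 1 < f p.succ := by
  have hspan : f 0 + ν < f (Fin.last ν) := by
    have h3 := mono_low hf (Fin.last ν)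
    simp only [Fin.val_last] at h3
    rcases Nat.lt_or_ge (f 0 + ν) (f (Fin.last ν)) with h | h
    · exact h
    · exfalso
      apply hcons
      intro i
      have h1 := mono_low hf i
      have h2 := mono_high hf i
      have := i.isLt
      omega
  refine ⟨hspan, ?_⟩
  by_contra hno
  push_neg at hno
  have hub : ∀ i : Fin (ν+1), f i ≤ f 0 + (i:ℕ) := by
    intro i
    induction i using Fin.induction with
    | zero => simp
    | succ k ihk =>
      have h1 := hno k
      simp only [Fin.coe_castSucc] at ihk
      simp only [Fin.val_succ]
      omega
  have := hub (Fin.last ν)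
  simp only [Fin.val_last] at this
  omega

lemma WAw
    (ha : ∀ β : Fin ν → ℕ, StrictMono β → (∀ k, 1 ≤ β k) → (∀ k, β k < N) →
      0 < mnr z (Fin.cons 0 β))
    (hb : ∀ t, t + (ν+1) ≤ N → 0 ≤ mnr z (fun i : Fin (ν+1) => t + (i:ℕ))) :
    ∀ f : Fin (ν+1) → ℕ, StrictMono f → (∀ i, f i < N) → 0 ≤ mnr z f := by
  suffices H : ∀ d : ℕ, ∀ f : Fin (ν+1) → ℕ, StrictMono f → (∀ i, f i < N) →
      f (Fin.last ν) - f 0 ≤ d → 0 ≤ mnr z f by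
    exact fun f hf hN => H (f (Fin.last ν) - f 0) f hf hN le_rfl
  intro d
  induction d using Nat.strong_induction_on with
  | _ d IH =>
  intro f hf hN hd
  by_cases hcons : ∀ i : Fin (ν+1), f i = f 0 + (i:ℕ)
  · have hm : mnr z f = mnr z (fun i : Fin (ν+1) => f 0 + (i:ℕ)) := by
      unfold mnr
      refine congrArg Matrix.det ?_
      ext i j
      rw [Matrix.of_apply, Matrix.of_apply, hcons i]
    rw [hm]
    apply hb
    have h1 := hN (Fin.last ν)
    rw [hcons (Fin.last ν)] at h1
    simp only [Fin.val_last] at h1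
    omega
  rcases Nat.eq_zero_or_pos (f 0) with hf0 | hf0
  · obtain ⟨he, hm, h1, h2⟩ := tail_facts z hf hN hf0
    rw [he]
    exact (ha _ hm h1 h2).le
  · obtain ⟨hspan, p, hp⟩ := gap_exists hf hcons
    obtain ⟨A, B, P, Q, R, hAm, hAN, hBm, hBN, hA0, hAl, hB0, hBl, hPp, hQp, hRp, hrel⟩ :=
      step z f hf hN hf0 p hp ha
    have hAle : A 0 ≤ A (Fin.last ν) := hAm.monotone (Fin.zero_le _)
    have hBle : B 0 ≤ B (Fin.last ν) := hBm.monotone (Fin.zero_le _)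
    have hA := IH (d-1) (by omega) A hAm hAN (by omega)
    have hB := IH (d-1) (by omega) B hBm hBN (by omega)
    have hsum : 0 ≤ Q * mnr z A + R * mnr z B :=
      add_nonneg (mul_nonneg hQp.le hA) (mul_nonneg hRp.le hB)
    rw [← hrel] at hsum
    exact le_of_mul_le_mul_left (by simpa using hsum) hPp

lemma WAs
    (ha : ∀ β : Fin ν → ℕ, StrictMono β → (∀ k, 1 ≤ β k) → (∀ k, β k < N) →
      0 < mnr z (Fin.cons 0 β))
    (hb : ∀ t, t + (ν+1) ≤ N → 0 < mnr z (fun i : Fin (ν+1) => t + (i:ℕ))) :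
    ∀ f : Fin (ν+1) → ℕ, StrictMono f → (∀ i, f i < N) → 0 < mnr z f := by
  suffices H : ∀ d : ℕ, ∀ f : Fin (ν+1) → ℕ, StrictMono f → (∀ i, f i < N) →
      f (Fin.last ν) - f 0 ≤ d → 0 < mnr z f by
    exact fun f hf hN => H (f (Fin.last ν) - f 0) f hf hN le_rfl
  intro d
  induction d using Nat.strong_induction_on with
  | _ d IH =>
  intro f hf hN hd
  by_cases hcons : ∀ i : Fin (ν+1), f i = f 0 + (i:ℕ)
  · have hm : mnr z f = mnr z (fun i : Fin (ν+1) => f 0 + (i:ℕ)) := by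
      unfold mnr
      refine congrArg Matrix.det ?_
      ext i j
      rw [Matrix.of_apply, Matrix.of_apply, hcons i]
    rw [hm]
    apply hb
    have h1 := hN (Fin.last ν)
    rw [hcons (Fin.last ν)] at h1
    simp only [Fin.val_last] at h1
    omega
  rcases Nat.eq_zero_or_pos (f 0) with hf0 | hf0
  · obtain ⟨he, hm, h1, h2⟩ := tail_facts z hf hN hf0
    rw [he]
    exact ha _ hm h1 h2
  · obtain ⟨hspan, p, hp⟩ := gap_exists hf hcons
    obtain ⟨A, B, P, Q, R, hAm, hAN, hBm, hBN, hA0, hAl, hB0, hBl, hPp, hQp, hRp, hrel⟩ :=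
      step z f hf hN hf0 p hp ha
    have hAle : A 0 ≤ A (Fin.last ν) := hAm.monotone (Fin.zero_le _)
    have hBle : B 0 ≤ B (Fin.last ν) := hBm.monotone (Fin.zero_le _)
    have hA := IH (d-1) (by omega) A hAm hAN (by omega)
    have hB := IH (d-1) (by omega) B hBm hBN (by omega)
    have hsum : 0 < Q * mnr z A + R * mnr z B :=
      add_pos (mul_pos hQp hA) (mul_pos hRp hB)
    rw [← hrel] at hsum
    exact lt_of_mul_lt_mul_left (by simpa using hsum) hPp.le

end WA

def stair (μ r t : ℕ) : Fin μ → ℕ :=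
  fun i => if (i:ℕ) < μ - r then (i:ℕ) else t + (i:ℕ) - (μ - r)

def HI (z : ℕ → ℕ → ℝ) (μ : ℕ) : Prop :=
  ∀ i j : ℕ, i < μ → j < μ → z i j = if i = j then 1 else 0

def HS (z : ℕ → ℕ → ℝ) (μ N : ℕ) : Prop :=
  ∀ r t : ℕ, 1 ≤ r → r < μ → μ - r ≤ t → t + r ≤ N → 0 < mnr z (stair μ r t)

def HBs (z : ℕ → ℕ → ℝ) (μ N : ℕ) : Prop :=
  ∀ t, t + μ ≤ N → 0 < mnr z (fun i : Fin μ => t + (i:ℕ))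

def HBw (z : ℕ → ℕ → ℝ) (μ N : ℕ) : Prop :=
  ∀ t, t + μ ≤ N → 0 ≤ mnr z (fun i : Fin μ => t + (i:ℕ))

lemma expand {ν : ℕ} (z : ℕ → ℕ → ℝ)
    (hz0 : ∀ j : ℕ, j < ν + 1 → z 0 j = if 0 = j then 1 else 0)
    (β : Fin ν → ℕ) (hβ : ∀ k, 1 ≤ β k) :
    mnr z (Fin.cons 0 β) = mnr (fun i j => z (i+1) (j+1)) (fun k => β k - 1) := by
  unfold mnr
  rw [Matrix.det_succ_row_zero]
  rw [Finset.sum_eq_single (0 : Fin (ν+1))]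
  · simp only [Matrix.of_apply, Fin.cons_zero, Fin.val_zero, pow_zero, one_mul]
    rw [hz0 0 (by omega), if_pos rfl, one_mul]
    refine congrArg Matrix.det ?_
    ext r s
    simp only [Matrix.submatrix_apply, Matrix.of_apply, Fin.cons_succ, Fin.succAbove_zero,
      Fin.val_succ]
    congr 1
    have := hβ r
    omega
  · intro b _ hb
    have hbv : (0:ℕ) ≠ (b:ℕ) := by
      intro h
      exact hb (Fin.ext (by simp only [Fin.val_zero]; omega))
    have hz : z ((Fin.cons 0 β : Fin (ν+1) → ℕ) 0) ((b:ℕ)) = 0 := by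
      rw [Fin.cons_zero, hz0 (b:ℕ) b.isLt, if_neg hbv]
    rw [Matrix.of_apply, hz]
    ring
  · intro h
    exact absurd (Finset.mem_univ _) h

lemma lift {μ : ℕ} (z : ℕ → ℕ → ℝ) (hI : HI z (μ+1)) (σ : Fin μ → ℕ) :
    mnr (fun i j => z (i+1) (j+1)) σ = mnr z (Fin.cons 0 (fun k => σ k + 1)) := by
  rw [expand z (fun j hj => hI 0 j (by omega) hj) (fun k => σ k + 1) (fun k => by show 1 ≤ σ k + 1; omega)]
  have he : (fun k : Fin μ => σ k + 1 - 1) = σ := by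
    funext k
    omega
  rw [he]

lemma stair_window (μ t : ℕ) : stair μ μ t = fun i : Fin μ => t + (i:ℕ) := by
  funext i
  unfold stair
  rw [if_neg (by omega)]
  omega

lemma stair_shift {μ r t : ℕ} (hr : r ≤ μ) :
    Fin.cons 0 (fun k : Fin μ => stair μ r t k + 1) = stair (μ+1) r (t+1) := by
  funext i
  refine Fin.cases ?_ (fun k => ?_) i
  · rw [Fin.cons_zero]
    unfold stair
    rw [if_pos (by simp only [Fin.val_zero]; omega)]
    simp
  · rw [Fin.cons_succ]
    unfold stair
    simp only [Fin.val_succ]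
    rcases Nat.lt_or_ge ((k:ℕ)) (μ - r) with h | h
    · rw [if_pos h, if_pos (by omega)]
    · rw [if_neg (by omega), if_neg (by omega)]
      omega

lemma quot_HI {μ : ℕ} {z : ℕ → ℕ → ℝ} (h : HI z (μ+1)) :
    HI (fun i j => z (i+1) (j+1)) μ := by
  intro i j hi hj
  exact (h (i+1) (j+1) (by omega) (by omega)).trans (by simp)

lemma quot_HS {μ N : ℕ} {z : ℕ → ℕ → ℝ} (hS : HS z (μ+1) N) (hI : HI z (μ+1)) :
    HS (fun i j => z (i+1) (j+1)) μ (N-1) := by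
  intro r t hr1 hrμ ht1 ht2
  rw [lift z hI (stair μ r t)]
  rw [show (fun k : Fin μ => stair μ r t k + 1) = (fun k : Fin μ => stair μ r t k + 1) from rfl]
  rw [stair_shift (le_of_lt hrμ)]
  exact hS r (t+1) hr1 (by omega) (by omega) (by omega)

lemma quot_HB {μ N : ℕ} {z : ℕ → ℕ → ℝ} (hS : HS z (μ+1) N) (hI : HI z (μ+1)) :
    HBs (fun i j => z (i+1) (j+1)) μ (N-1) := by
  intro t ht
  rcases Nat.eq_zero_or_pos μ with rfl | hμ
  · unfold mnr
    simp
  · rw [← stair_window μ t, lift z hI, stair_shift (le_refl μ)]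
    exact hS μ (t+1) hμ (by omega) (by omega) (by omega)

theorem Sthm : ∀ (μ : ℕ) (z : ℕ → ℕ → ℝ) (N : ℕ), HI z μ → HS z μ N → HBs z μ N →
    ∀ f : Fin μ → ℕ, StrictMono f → (∀ i, f i < N) → 0 < mnr z f := by
  intro μ
  induction μ with
  | zero =>
    intro z N _ _ _ f _ _
    unfold mnr
    simp
  | succ ν IHμ =>
    intro z N hI hS hB f hf hN
    have ha : ∀ β : Fin ν → ℕ, StrictMono β → (∀ k, 1 ≤ β k) → (∀ k, β k < N) →
        0 < mnr z (Fin.cons 0 β) := by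
      intro β hβm hβ1 hβN
      rw [expand z (fun j hj => hI 0 j (by omega) hj) β hβ1]
      refine IHμ _ (N-1) (quot_HI hI) (quot_HS hS hI) (quot_HB hS hI) _ ?_ ?_
      · intro a b hab
        show β a - 1 < β b - 1
        have h1 := hβ1 a
        have h2 : β a < β b := hβm hab
        omega
      · intro i
        show β i - 1 < N - 1
        have := hβN i
        have := hβ1 i
        omega
    exact WAs z ha hB f hf hN

theorem Wkthm (μ : ℕ) (z : ℕ → ℕ → ℝ) (N : ℕ) (hI : HI z μ) (hS : HS z μ N)
    (hB : HBw z μ N) :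
    ∀ f : Fin μ → ℕ, StrictMono f → (∀ i, f i < N) → 0 ≤ mnr z f := by
  cases μ with
  | zero =>
    intro f _ _
    unfold mnr
    simp
  | succ ν =>
    intro f hf hN
    have ha : ∀ β : Fin ν → ℕ, StrictMono β → (∀ k, 1 ≤ β k) → (∀ k, β k < N) →
        0 < mnr z (Fin.cons 0 β) := by
      intro β hβm hβ1 hβN
      rw [expand z (fun j hj => hI 0 j (by omega) hj) β hβ1]
      refine Sthm ν _ (N-1) (quot_HI hI) (quot_HS hS hI) (quot_HB hS hI) _ ?_ ?_
      · intro a b hab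
        show β a - 1 < β b - 1
        have h1 := hβ1 a
        have h2 : β a < β b := hβm hab
        omega
      · intro i
        show β i - 1 < N - 1
        have := hβN i
        have := hβ1 i
        omega
    exact WAw z ha hB f hf hN

lemma fin_strictMono_id : ∀ {m : ℕ} (g : Fin m → Fin m), StrictMono g → g = id
  | 0, g, _ => funext fun i => absurd i.isLt (by omega)
  | (μ+1), g, hg => by
    funext i
    show g i = i
    have h1 : ∀ i : Fin (μ+1), (i:ℕ) ≤ (g i : ℕ) := by
      intro i
      induction i using Fin.induction with
      | zero => simp
      | succ k ih =>
        have hlt : (g k.castSucc : ℕ) < (g k.succ : ℕ) := hg (Fin.castSucc_lt_succ : k.castSucc < k.succ)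
        simp only [Fin.coe_castSucc] at ih
        simp only [Fin.val_succ]
        omega
    have h2 : ∀ i : Fin (μ+1), (g i : ℕ) ≤ (i:ℕ) := by
      intro i
      induction i using Fin.reverseInduction with
      | last =>
        have := (g (Fin.last _)).isLt
        simp only [Fin.val_last]
        omega
      | cast k ih =>
        have hlt : (g k.castSucc : ℕ) < (g k.succ : ℕ) := hg (Fin.castSucc_lt_succ : k.castSucc < k.succ)
        simp only [Fin.val_succ] at ih
        simp only [Fin.coe_castSucc]
        omega
    have := h1 i
    have := h2 i
    exact Fin.ext (by omega)

end Stmt8Aux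

open Stmt8Aux

/-- for `n ≥ 2m`, the given sign pattern on the staircase row sets with
full column set implies that `X` is `m`-sign consistent. -/
theorem stmt8 {n m : ℕ} (X : Matrix (Fin n) (Fin m) ℝ) (h2m : 2 * m ≤ n)
    (hcond : ∃ ε : ℝ, (ε = 1 ∨ ε = -1) ∧
      (∀ r ∈ Finset.Ico 1 m, ∀ t ∈ Finset.Icc (m - r + 1) (n - r + 1),
        ∀ f : Fin m → Fin n,
          (∀ i, (f i : ℕ) =
            if (i : ℕ) < m - r then (i : ℕ) else (i : ℕ) + t - 1 - (m - r)) →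
          0 < ε * (X.submatrix f id).det) ∧
      (∀ t ∈ Finset.Icc 1 m, ∀ f : Fin m → Fin n,
          (∀ i, (f i : ℕ) = t - 1 + (i : ℕ)) →
          0 < ε * (X.submatrix f id).det) ∧
      (∀ t ∈ Finset.Icc (m + 1) (n - m + 1), ∀ f : Fin m → Fin n,
          (∀ i, (f i : ℕ) = t - 1 + (i : ℕ)) →
          0 ≤ ε * (X.submatrix f id).det)) :
    SC X m := by
  classical
  rcases Nat.eq_zero_or_pos m with rfl | hm
  · left
    intro f g _ _
    have : (X.submatrix f g).det = 1 := Matrix.det_fin_zero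
    rw [this]
    norm_num
  obtain ⟨ε, hε, hstair, hconsS, hconsW⟩ := hcond
  have hmn : m ≤ n := by omega
  have hεne : ε ≠ 0 := by rcases hε with rfl | rfl <;> norm_num
  set B : Matrix (Fin m) (Fin m) ℝ := X.submatrix (Fin.castLE hmn) id with hBdef
  have hB : 0 < ε * B.det := by
    refine hconsS 1 (Finset.mem_Icc.mpr ⟨le_refl 1, hm⟩) (Fin.castLE hmn) (fun i => ?_)
    simp only [Fin.coe_castLE]
    omega
  have hBne : B.det ≠ 0 := by
    intro h
    rw [h, mul_zero] at hB
    exact lt_irrefl 0 hB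
  have hBunit : IsUnit B.det := isUnit_iff_ne_zero.mpr hBne
  set Y : Matrix (Fin n) (Fin m) ℝ := X * B⁻¹ with hYdef
  set zY : ℕ → ℕ → ℝ := fun t j =>
    if ht : t < n then (if hj : j < m then Y ⟨t, ht⟩ ⟨j, hj⟩ else 0) else 0 with hz
  have hminor : ∀ (f : Fin m → ℕ) (hfN : ∀ i, f i < n),
      mnr zY f = (X.submatrix (fun i => (⟨f i, hfN i⟩ : Fin n)) id).det * B.det⁻¹ := by
    intro f hfN
    have h1 : mnr zY f = (Y.submatrix (fun i => (⟨f i, hfN i⟩ : Fin n)) id).det := by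
      unfold mnr
      refine congrArg Matrix.det ?_
      ext i j
      simp only [Matrix.of_apply, Matrix.submatrix_apply, hz, id_eq]
      rw [dif_pos (hfN i), dif_pos j.isLt]
    have h2 : (Y.submatrix (fun i => (⟨f i, hfN i⟩ : Fin n)) id)
        = (X.submatrix (fun i => (⟨f i, hfN i⟩ : Fin n)) id) * B⁻¹ := by
      rw [hYdef]
      rw [Matrix.submatrix_mul X B⁻¹ _ id id Function.bijective_id]
      rw [Matrix.submatrix_id_id]
    rw [h1, h2, Matrix.det_mul, Matrix.det_nonsing_inv, Ring.inverse_eq_inv']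
  have hsign : ∀ x : ℝ, x * B.det⁻¹ = (ε * x) * (ε * B.det)⁻¹ := by
    intro x
    rcases hε with rfl | rfl
    · simp
    · rw [neg_one_mul, neg_one_mul, inv_neg]
      ring
  have hI : HI zY m := by
    intro i j hi hj
    have hin : i < n := by omega
    simp only [hz]
    rw [dif_pos hin, dif_pos hj]
    have hrow : Y ⟨i, hin⟩ ⟨j, hj⟩ = (B * B⁻¹) ⟨i, hi⟩ ⟨j, hj⟩ := by
      rw [hYdef]
      simp only [Matrix.mul_apply, hBdef, Matrix.submatrix_apply, id_eq]
      refine Finset.sum_congr rfl fun k _ => ?_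
      have he : (⟨i, hin⟩ : Fin n) = Fin.castLE hmn ⟨i, hi⟩ := Fin.ext rfl
      rw [he]
    rw [hrow, Matrix.mul_nonsing_inv B hBunit, Matrix.one_apply]
    by_cases h : i = j
    · subst h
      rw [if_pos rfl, if_pos rfl]
    · rw [if_neg (by simp [Fin.mk.injEq, h]), if_neg h]
  have hS : HS zY m n := by
    intro r t hr1 hrm ht1 ht2
    have hbnd : ∀ i : Fin m, stair m r t i < n := by
      intro i
      have := i.isLt
      unfold stair
      split_ifs <;> omega
    have hprop : ∀ i : Fin m, ((⟨stair m r t i, hbnd i⟩ : Fin n) : ℕ)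
        = if (i:ℕ) < m - r then (i:ℕ) else (i:ℕ) + (t+1) - 1 - (m - r) := by
      intro i
      show stair m r t i = _
      unfold stair
      split_ifs <;> omega
    have hdet := hstair r (Finset.mem_Ico.mpr ⟨hr1, hrm⟩) (t+1)
      (Finset.mem_Icc.mpr ⟨by omega, by omega⟩) _ hprop
    rw [hminor _ hbnd, hsign]
    exact mul_pos hdet (inv_pos.mpr hB)
  have hBw : HBw zY m n := by
    intro t ht
    have hbnd : ∀ i : Fin m, t + (i:ℕ) < n := by
      intro i
      have := i.isLt
      omega
    have hprop : ∀ i : Fin m, ((⟨t + (i:ℕ), hbnd i⟩ : Fin n) : ℕ) = (t+1) - 1 + (i:ℕ) := by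
      intro i
      show t + (i:ℕ) = _
      omega
    rw [hminor _ hbnd, hsign]
    rcases Nat.lt_or_ge t m with hcase | hcase
    · have hdet := hconsS (t+1) (Finset.mem_Icc.mpr ⟨by omega, by omega⟩) _ hprop
      exact (mul_pos hdet (inv_pos.mpr hB)).le
    · have hdet := hconsW (t+1) (Finset.mem_Icc.mpr ⟨by omega, by omega⟩) _ hprop
      exact mul_nonneg hdet (inv_pos.mpr hB).le
  have main : ∀ F : Fin m → Fin n, StrictMono F → 0 ≤ ε * (X.submatrix F id).det := by
    intro F hF
    have hfN : ∀ i, ((F i : ℕ)) < n := fun i => (F i).isLt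
    have hmono : StrictMono (fun i => ((F i):ℕ)) := fun a b h => hF h
    have h0 := Wkthm m zY n hI hS hBw (fun i => (F i:ℕ)) hmono hfN
    rw [hminor _ hfN] at h0
    have hFe : (fun i => (⟨(F i : ℕ), hfN i⟩ : Fin n)) = F := by
      funext i
      exact Fin.ext rfl
    rw [hFe] at h0
    have hre : ε * (X.submatrix F id).det
        = ((X.submatrix F id).det * B.det⁻¹) * (ε * B.det) := by
      field_simp
    rw [hre]
    exact mul_nonneg h0 hB.le
  rcases hε with rfl | rfl
  · left
    intro f g hf hg
    rw [fin_strictMono_id g hg]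
    have := main f hf
    simpa using this
  · right
    intro f g hf hg
    rw [fin_strictMono_id g hg]
    have := main f hf
    rw [neg_one_mul] at this
    linarith
end

section
/- Let σ > 0 and let T(σ) be the n×n real matrix with entries T(σ)_{ij} = e^{−σ(i−j)²}. Let X be a real n×m matrix with m ≤ n and let k ≤ m. If X is k-sign consistent and every k columns of X are linearly independent, then T(σ)·X is strictly k-sign consistent. -/
open Matrix Polynomial Filter

section Aux

open Finset Matrix Equiv Polynomial Filter

/-- A sum of `s+1` monomials with nonzero coefficients cannot vanish at `s+1` distinct
positive points. -/
lemma no_vanish : ∀ (s : ℕ) (e : Fin (s+1) → ℕ) (c : Fin (s+1) → ℝ), StrictMono e →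
    (∀ i, c i ≠ 0) → ∀ z : Fin (s+1) → ℝ, StrictMono z → (∀ i, 0 < z i) →
    ¬ (∀ i, ∑ j, c j * z i ^ e j = 0) := by
  intro s
  induction s with
  | zero =>
    intro e c _ hc z _ hz hroot
    have h0 := hroot 0
    rw [Fin.sum_univ_one] at h0
    exact mul_ne_zero (hc 0) (ne_of_gt (pow_pos (hz 0) _)) h0
  | succ s IH =>
    intro e c he hc z hzm hzp hroot
    set n : Fin (s+2) → ℕ := fun j => e j - e 0 with hn
    have hen : ∀ j, e j = e 0 + n j := fun j => by
      have : e 0 ≤ e j := he.monotone (Fin.zero_le j)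
      simp [hn]; omega
    set G : ℝ → ℝ := fun t => ∑ j, c j * t ^ n j with hG
    have hGroot : ∀ i, G (z i) = 0 := by
      intro i
      have h0 := hroot i
      have hfac : ∑ j, c j * z i ^ e j = z i ^ e 0 * G (z i) := by
        rw [hG, mul_sum]
        refine Finset.sum_congr rfl fun j _ => ?_
        rw [hen j, pow_add]; ring
      rw [hfac] at h0
      rcases mul_eq_zero.1 h0 with h | h
      · exact absurd h (ne_of_gt (pow_pos (hzp i) _))
      · exact h
    set G' : ℝ → ℝ := fun t => ∑ j, c j * ((n j : ℝ) * t ^ (n j - 1)) with hG'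
    have hderiv : ∀ t : ℝ, HasDerivAt G (G' t) t := by
      intro t
      exact HasDerivAt.fun_sum fun j _ => ((hasDerivAt_pow (n j) t).const_mul (c j))
    have hGcont : Continuous G :=
      continuous_finset_sum _ fun j _ => continuous_const.mul (continuous_pow _)
    have hex : ∀ i : Fin (s+1), ∃ w, w ∈ Set.Ioo (z i.castSucc) (z i.succ) ∧ G' w = 0 := by
      intro i
      have hlt : z i.castSucc < z i.succ := hzm Fin.castSucc_lt_succ
      obtain ⟨w, hw, hw0⟩ := exists_hasDerivAt_eq_zero hlt hGcont.continuousOn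
        ((hGroot i.castSucc).trans (hGroot i.succ).symm) (fun x _ => hderiv x)
      exact ⟨w, hw, hw0⟩
    choose w hw hw0 using hex
    have hwm : StrictMono w := by
      intro i i' hii
      have h1 : w i < z i.succ := (hw i).2
      have h2 : z i'.castSucc < w i' := (hw i').1
      have h3 : z i.succ ≤ z i'.castSucc := by
        apply hzm.monotone
        rw [Fin.succ_le_castSucc_iff]
        exact hii
      linarith
    have hwp : ∀ i, 0 < w i := fun i => lt_trans (hzp i.castSucc) (hw i).1
    have hne0 : ∀ j : Fin (s+1), n j.succ ≠ 0 := by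
      intro j
      have : e 0 < e j.succ := he (Fin.succ_pos j)
      simp [hn]; omega
    refine IH (fun j => n j.succ - 1) (fun j => c j.succ * (n j.succ : ℝ)) ?_ ?_ w hwm hwp ?_
    · intro j j' hjj
      have h1 : e j.succ < e j'.succ := he (Fin.succ_lt_succ_iff.mpr hjj)
      have h2 : e 0 < e j.succ := he (Fin.succ_pos j)
      simp only [hn]; omega
    · intro j
      exact mul_ne_zero (hc j.succ) (Nat.cast_ne_zero.mpr (hne0 j))
    · intro i
      have h0 : ∑ j : Fin (s+1+1), c j * ((n j : ℝ) * w i ^ (n j - 1)) = 0 := hw0 i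
      rw [Fin.sum_univ_succ] at h0
      have hn0 : n 0 = 0 := by simp [hn]
      rw [hn0] at h0
      simp only [Nat.cast_zero, zero_mul, mul_zero, zero_add] at h0
      calc ∑ j : Fin (s+1), c j.succ * (n j.succ : ℝ) * w i ^ (n j.succ - 1)
          = ∑ j : Fin (s+1), c j.succ * ((n j.succ : ℝ) * w i ^ (n j.succ - 1)) := by
            refine Finset.sum_congr rfl fun j _ => by ring
        _ = 0 := h0

lemma genVandermonde_pos : ∀ (k : ℕ) (z : Fin k → ℝ) (e : Fin k → ℕ), StrictMono z →
    (∀ i, 0 < z i) → StrictMono e →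
    0 < (Matrix.of fun a b : Fin k => z a ^ e b).det := by
  intro k
  induction k with
  | zero => intro z e _ _ _; simp [Matrix.det_isEmpty]
  | succ k IH =>
    intro z e hzm hzp hem
    -- minors along the last row
    set M : Fin (k+1) → ℝ :=
      fun j => (Matrix.of fun a b : Fin k => z a.castSucc ^ e (j.succAbove b)).det with hM
    have hMpos : ∀ j, 0 < M j := by
      intro j
      exact IH _ _ (fun a a' h => hzm (Fin.castSucc_lt_castSucc_iff.mpr h))
        (fun a => hzp a.castSucc)
        (fun b b' h => hem ((Fin.strictMono_succAbove j) h))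
    set cf : Fin (k+1) → ℝ := fun j => (-1 : ℝ) ^ ((k : ℕ) + (j : ℕ)) * M j with hcf
    have hcfne : ∀ j, cf j ≠ 0 := by
      intro j
      exact mul_ne_zero (pow_ne_zero _ (by norm_num)) (ne_of_gt (hMpos j))
    set f : ℝ → ℝ := fun t => ∑ j : Fin (k+1), cf j * t ^ e j with hf
    -- f t is the determinant with last row replaced by (t ^ e j)
    have hdet : ∀ t : ℝ,
        (Matrix.of fun a b : Fin (k+1) => (Function.update z (Fin.last k) t) a ^ e b).det
          = f t := by
      intro t
      rw [Matrix.det_succ_row _ (Fin.last k)]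
      refine Finset.sum_congr rfl fun j _ => ?_
      have h1 : (Matrix.of fun a b : Fin (k+1) => (Function.update z (Fin.last k) t) a ^ e b)
          (Fin.last k) j = t ^ e j := by
        simp [Function.update_self]
      have h2 : ((Matrix.of fun a b : Fin (k+1) =>
            (Function.update z (Fin.last k) t) a ^ e b).submatrix
            (Fin.last k).succAbove j.succAbove) =
          (Matrix.of fun a b : Fin k => z a.castSucc ^ e (j.succAbove b)) := by
        ext a b
        simp [Fin.succAbove_last, Function.update_of_ne (Fin.castSucc_lt_last a).ne]
      rw [h1, h2]
      simp only [hcf, Fin.val_last]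
      ring
    have hroot : ∀ a : Fin k, f (z a.castSucc) = 0 := by
      intro a
      rw [← hdet]
      apply Matrix.det_zero_of_row_eq (i := a.castSucc) (j := Fin.last k)
        (Fin.castSucc_lt_last a).ne
      funext b
      simp [Function.update_of_ne (Fin.castSucc_lt_last a).ne, Function.update_self]
    have hgoal : (Matrix.of fun a b : Fin (k+1) => z a ^ e b).det = f (z (Fin.last k)) := by
      rw [← hdet, Function.update_eq_self]
    rw [hgoal]
    by_contra hle
    push_neg at hle
    -- find p ≥ z (last) with f p = 0
    have hp : ∃ p, z (Fin.last k) ≤ p ∧ f p = 0 := by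
      rcases eq_or_lt_of_le hle with heq | hlt
      · exact ⟨z (Fin.last k), le_refl _, heq⟩
      · -- f (z last) < 0; use eventual positivity
        by_cases hdeg : e (Fin.last k) = 0
        · -- then k = 0 and f is the positive constant cf 0
          exfalso
          have hk : k = 0 := by
            by_contra hk0
            have h0lt : (0 : Fin (k+1)) < Fin.last k := by
              rw [Fin.lt_iff_val_lt_val]
              simp [Fin.val_last]
              omega
            have := hem h0lt
            omega
          subst hk
          have : f (z (Fin.last 0)) = cf 0 := by
            simp [hf, Fin.sum_univ_one, hdeg]
            have : e 0 = 0 := hdeg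
            simp [this]
          rw [this] at hlt
          have : 0 < cf 0 := by
            have := hMpos 0
            simp [hcf]
            linarith
          linarith
        · set P : Polynomial ℝ := ∑ j : Fin (k+1), Polynomial.C (cf j) * Polynomial.X ^ (e j)
            with hP
          have heval : ∀ t : ℝ, P.eval t = f t := by
            intro t
            simp [hP, hf, Polynomial.eval_finset_sum]
          have hcoeff : P.coeff (e (Fin.last k)) = cf (Fin.last k) := by
            rw [hP, Polynomial.finset_sum_coeff]
            rw [Finset.sum_eq_single (Fin.last k)]
            · simp [Polynomial.coeff_C_mul, Polynomial.coeff_X_pow]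
            · intro j _ hj
              simp [Polynomial.coeff_C_mul, Polynomial.coeff_X_pow]
              intro hje
              exact absurd (hem.injective hje) (Ne.symm hj)
            · simp
          have hdegle : P.degree ≤ (e (Fin.last k) : WithBot ℕ) := by
            rw [hP]
            refine le_trans (Polynomial.degree_sum_le _ _) ?_
            rw [Finset.sup_le_iff]
            intro j _
            refine le_trans (Polynomial.degree_C_mul_X_pow_le _ _) ?_
            exact_mod_cast Nat.cast_le.mpr (hem.monotone (Fin.le_last j))
          have hPdeg : P.degree = (e (Fin.last k) : WithBot ℕ) :=
            Polynomial.degree_eq_of_le_of_coeff_ne_zero hdegle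
              (by rw [hcoeff]; exact hcfne _)
          have hlead : P.leadingCoeff = cf (Fin.last k) := by
            rw [Polynomial.leadingCoeff, Polynomial.natDegree_eq_of_degree_eq_some hPdeg, hcoeff]
          have hleadpos : 0 < P.leadingCoeff := by
            rw [hlead, hcf]
            simp only [Fin.val_last]
            have : (-1 : ℝ) ^ (k + k) = 1 := Even.neg_one_pow ⟨k, by ring⟩
            rw [this, one_mul]
            exact hMpos _
          have htend : Filter.Tendsto (fun x => P.eval x) Filter.atTop Filter.atTop := by
            apply Polynomial.tendsto_atTop_of_leadingCoeff_nonneg P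
            · rw [hPdeg]
              exact_mod_cast Nat.pos_of_ne_zero hdeg
            · exact hleadpos.le
          obtain ⟨T, hT⟩ := ((htend.eventually_ge_atTop 1).and
            (Filter.eventually_gt_atTop (z (Fin.last k)))).exists
          have hcont : ContinuousOn f (Set.Icc (z (Fin.last k)) T) :=
            (continuous_finset_sum _ fun j _ =>
              continuous_const.mul (continuous_pow _)).continuousOn
          have h0mem : (0 : ℝ) ∈ Set.Ioo (f (z (Fin.last k))) (f T) := by
            constructor
            · exact hlt
            · rw [← heval]; linarith [hT.1]
          obtain ⟨r, hr, hfr⟩ := intermediate_value_Ioo hT.2.le hcont h0mem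
          exact ⟨r, hr.1.le, hfr⟩
    obtain ⟨p, hpge, hfp⟩ := hp
    -- build k+1 distinct positive roots
    set q : Fin (k+1) → ℝ := Function.update z (Fin.last k) p with hq
    have hqm : StrictMono q := by
      intro i i' hii
      rcases eq_or_ne i' (Fin.last k) with h' | h'
      · subst h'
        rw [hq, Function.update_of_ne hii.ne, Function.update_self]
        exact lt_of_lt_of_le (hzm hii) hpge
      · have hi : i ≠ Fin.last k := by
          intro h
          subst h
          exact absurd (lt_of_le_of_lt (Fin.le_last i') hii) (lt_irrefl _)
        rw [hq, Function.update_of_ne hi, Function.update_of_ne h']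
        exact hzm hii
    have hqp : ∀ i, 0 < q i := by
      intro i
      rcases eq_or_ne i (Fin.last k) with h | h
      · subst h; rw [hq, Function.update_self]
        exact lt_of_lt_of_le (hzp _) hpge
      · rw [hq, Function.update_of_ne h]; exact hzp i
    have hqroot : ∀ i, ∑ j, cf j * q i ^ e j = 0 := by
      intro i
      rcases eq_or_ne i (Fin.last k) with h | h
      · subst h; rw [hq, Function.update_self]; exact hfp
      · obtain ⟨a, rfl⟩ := Fin.exists_castSucc_eq.mpr h
        rw [hq, Function.update_of_ne h]
        exact hroot a
    exact no_vanish k e cf hem hcfne q hqm hqp hqroot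

lemma gauss_minor_pos {n k : ℕ} (σ : ℝ) (hσ : 0 < σ) (f g : Fin k → Fin n)
    (hf : StrictMono f) (hg : StrictMono g) :
    0 < ((Matrix.of fun i j : Fin n =>
      Real.exp (-σ * (((i : ℕ) : ℝ) - ((j : ℕ) : ℝ)) ^ 2)).submatrix f g).det := by
  set d1 : Fin k → ℝ := fun a => Real.exp (-σ * ((f a : ℕ) : ℝ) ^ 2) with hd1
  set d2 : Fin k → ℝ := fun b => Real.exp (-σ * ((g b : ℕ) : ℝ) ^ 2) with hd2
  set E : Matrix (Fin k) (Fin k) ℝ :=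
    Matrix.of fun a b => (Real.exp (2 * σ * ((f a : ℕ) : ℝ))) ^ ((g b : ℕ)) with hE
  have hfact : ((Matrix.of fun i j : Fin n =>
      Real.exp (-σ * (((i : ℕ) : ℝ) - ((j : ℕ) : ℝ)) ^ 2)).submatrix f g) =
      Matrix.diagonal d1 * E * Matrix.diagonal d2 := by
    ext a b
    rw [Matrix.mul_apply]
    rw [Finset.sum_eq_single b]
    · rw [Matrix.mul_apply, Finset.sum_eq_single a]
      · simp only [Matrix.diagonal_apply_eq, Matrix.submatrix_apply, Matrix.of_apply, hE, hd1, hd2]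
        rw [← Real.exp_nat_mul, ← Real.exp_add, ← Real.exp_add]
        congr 1
        ring
      · intro a' _ ha'
        simp [Matrix.diagonal_apply_ne' _ ha']
      · simp
    · intro b' _ hb'
      simp [Matrix.diagonal_apply_ne _ hb']
    · simp
  rw [hfact, Matrix.det_mul, Matrix.det_mul, Matrix.det_diagonal, Matrix.det_diagonal]
  have hEpos : 0 < E.det := by
    apply genVandermonde_pos k (fun a => Real.exp (2 * σ * ((f a : ℕ) : ℝ)))
      (fun b => (g b : ℕ))
    · intro a a' h
      apply Real.exp_lt_exp.mpr
      have : (f a : ℕ) < (f a' : ℕ) := hf h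
      have h2 : ((f a : ℕ) : ℝ) < ((f a' : ℕ) : ℝ) := Nat.cast_lt.mpr this
      nlinarith
    · intro a; exact Real.exp_pos _
    · intro b b' h
      exact hg h
  apply mul_pos (mul_pos _ hEpos)
  · exact Finset.prod_pos fun b _ => Real.exp_pos _
  · exact Finset.prod_pos fun a _ => Real.exp_pos _

/-- The increasing enumeration of a `k`-element subset of `Fin N`. -/
noncomputable def monoOf {N k : ℕ} (s : {s : Finset (Fin N) // s.card = k}) : Fin k → Fin N :=
  s.1.orderEmbOfFin s.2

lemma monoOf_strictMono {N k : ℕ} (s : {s : Finset (Fin N) // s.card = k}) :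
    StrictMono (monoOf s) := (s.1.orderEmbOfFin s.2).strictMono

/-- Cauchy–Binet formula. -/
theorem cauchyBinet {k N : ℕ} (A : Matrix (Fin k) (Fin N) ℝ) (B : Matrix (Fin N) (Fin k) ℝ) :
    (A * B).det = ∑ s : {s : Finset (Fin N) // s.card = k},
      (A.submatrix id (monoOf s)).det * (B.submatrix (monoOf s) id).det := by
  classical
  have step1 : (A * B).det = ∑ φ : Fin k → Fin N,
      (A.submatrix id φ).det * ∏ i, B (φ i) i := by
    have h1 : (A * B).det = ∑ φ : Fin k → Fin N, ∑ τ : Perm (Fin k),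
        ((Perm.sign τ : ℤ) : ℝ) * ∏ i, A (τ i) (φ i) * B (φ i) i := by
      simp only [det_apply', mul_apply, Finset.prod_univ_sum, Finset.mul_sum,
        Fintype.piFinset_univ]
      rw [Finset.sum_comm]
    rw [h1]
    refine Finset.sum_congr rfl fun φ _ => ?_
    rw [det_apply', Finset.sum_mul]
    refine Finset.sum_congr rfl fun τ _ => ?_
    rw [Finset.prod_mul_distrib]
    simp only [Matrix.submatrix_apply, id_eq]
    ring
  rw [step1]
  have step2 : ∑ φ : Fin k → Fin N, (A.submatrix id φ).det * ∏ i, B (φ i) i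
      = ∑ φ ∈ Finset.univ.filter (fun φ : Fin k → Fin N => Function.Injective φ),
        (A.submatrix id φ).det * ∏ i, B (φ i) i := by
    refine (Finset.sum_subset (Finset.filter_subset _ _) fun φ _ hni => ?_).symm
    simp only [Finset.mem_filter, Finset.mem_univ, true_and] at hni
    have : (A.submatrix id φ).det = 0 := by
      rw [Function.not_injective_iff] at hni
      obtain ⟨i, j, hij, hne⟩ := hni
      exact Matrix.det_zero_of_column_eq hne fun r => by simp [hij]
    rw [this, zero_mul]
  rw [step2]
  rw [Finset.sum_subtype (p := fun φ : Fin k → Fin N => Function.Injective φ)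
    (Finset.univ.filter (fun φ : Fin k → Fin N => Function.Injective φ))
    (fun φ => by simp) (fun φ => (A.submatrix id φ).det * ∏ i, B (φ i) i)]
  -- the bijection between (subset, permutation) pairs and injective maps
  set F : {s : Finset (Fin N) // s.card = k} × Perm (Fin k) →
      {φ : Fin k → Fin N // Function.Injective φ} :=
    fun p => ⟨monoOf p.1 ∘ p.2, (monoOf_strictMono p.1).injective.comp p.2.injective⟩ with hF
  have hFbij : Function.Bijective F := by
    constructor
    · rintro ⟨s, τ⟩ ⟨s', τ'⟩ hmk
      have heq : monoOf s ∘ ⇑τ = monoOf s' ∘ ⇑τ' := congrArg Subtype.val hmk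
      have hrange : Set.range (monoOf s) = Set.range (monoOf s') := by
        rw [← τ.surjective.range_comp (monoOf s), ← τ'.surjective.range_comp (monoOf s'), heq]
      have hss : s = s' := by
        apply Subtype.ext
        apply Finset.coe_injective
        have h1 : Set.range (monoOf s) = (s.1 : Set (Fin N)) := s.1.range_orderEmbOfFin s.2
        have h2 : Set.range (monoOf s') = (s'.1 : Set (Fin N)) := s'.1.range_orderEmbOfFin s'.2
        rw [← h1, ← h2, hrange]
      subst hss
      have hττ : τ = τ' := by
        apply Equiv.ext
        intro a
        exact (monoOf_strictMono s).injective (congrFun heq a)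
      rw [hττ]
    · rintro ⟨φ, hφ⟩
      set s : Finset (Fin N) := Finset.univ.image φ with hs
      have hsc : s.card = k := by
        rw [hs, Finset.card_image_of_injective _ hφ, Finset.card_univ, Fintype.card_fin]
      have hmem : ∀ a, φ a ∈ s := fun a => Finset.mem_image_of_mem φ (Finset.mem_univ a)
      set ψ : Fin k → Fin k := fun a => (s.orderIsoOfFin hsc).symm ⟨φ a, hmem a⟩ with hψ
      have hψinj : Function.Injective ψ := by
        intro a a' h
        apply hφ
        have := congrArg (s.orderIsoOfFin hsc) h
        rw [OrderIso.apply_symm_apply, OrderIso.apply_symm_apply] at this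
        exact congrArg Subtype.val this
      have hψbij : Function.Bijective ψ := (Finite.injective_iff_bijective).mp hψinj
      refine ⟨⟨⟨s, hsc⟩, Equiv.ofBijective ψ hψbij⟩, ?_⟩
      apply Subtype.ext
      funext a
      show monoOf ⟨s, hsc⟩ (ψ a) = φ a
      show s.orderEmbOfFin hsc (ψ a) = φ a
      rw [← Finset.coe_orderIsoOfFin_apply, hψ, OrderIso.apply_symm_apply]
  rw [← Fintype.sum_bijective F hFbij _ _ (fun p => rfl)]
  rw [Fintype.sum_prod_type]
  refine Finset.sum_congr rfl fun s _ => ?_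
  have hterm : ∀ τ : Perm (Fin k),
      (A.submatrix id (monoOf s ∘ ⇑τ)).det * ∏ i, B ((monoOf s ∘ ⇑τ) i) i
        = (A.submatrix id (monoOf s)).det *
          (((Perm.sign τ : ℤ) : ℝ) * ∏ i, (B.submatrix (monoOf s) id) (τ i) i) := by
    intro τ
    have h1 : A.submatrix id (monoOf s ∘ ⇑τ) = (A.submatrix id (monoOf s)).submatrix id ⇑τ := by
      rw [Matrix.submatrix_submatrix]
      rfl
    rw [h1, Matrix.det_permute']
    simp only [Matrix.submatrix_apply, id_eq, Function.comp_apply]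
    ring
  calc ∑ τ : Perm (Fin k), (A.submatrix id (monoOf s ∘ ⇑τ)).det * ∏ i, B ((monoOf s ∘ ⇑τ) i) i
      = ∑ τ : Perm (Fin k), (A.submatrix id (monoOf s)).det *
          (((Perm.sign τ : ℤ) : ℝ) * ∏ i, (B.submatrix (monoOf s) id) (τ i) i) :=
        Finset.sum_congr rfl fun τ _ => hterm τ
    _ = (A.submatrix id (monoOf s)).det * (B.submatrix (monoOf s) id).det := by
        rw [← Finset.mul_sum]
        congr 1
        exact (det_apply' _).symm

/-- If the rows of a `k × n` real matrix are linearly independent, some `k` columns give a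
nonzero minor (indexed by a subset via `monoOf`). -/
lemma exists_minor_ne_zero {k n : ℕ} (Y : Matrix (Fin k) (Fin n) ℝ)
    (hli : LinearIndependent ℝ (fun i : Fin k => Y i)) :
    ∃ s : {s : Finset (Fin n) // s.card = k}, (Y.submatrix id (monoOf s)).det ≠ 0 := by
  classical
  have hG : (Y * Yᵀ).det ≠ 0 := by
    intro hdet
    obtain ⟨v, hv, hv0⟩ := (Matrix.exists_mulVec_eq_zero_iff).mpr hdet
    have hw : Matrix.vecMul v Y = 0 := by
      have h1 : (Y * Yᵀ).mulVec v = Y.mulVec (Yᵀ.mulVec v) := by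
        rw [← Matrix.mulVec_mulVec]
      have h2 : dotProduct (Matrix.vecMul v Y) (Matrix.vecMul v Y) = 0 := by
        have : dotProduct v ((Y * Yᵀ).mulVec v) = 0 := by rw [hv0, dotProduct_zero]
        rw [h1, Matrix.dotProduct_mulVec, Matrix.mulVec_transpose] at this
        exact this
      exact dotProduct_self_eq_zero.mp h2
    apply hv
    have := Fintype.linearIndependent_iff.mp hli v ?_
    · funext i; exact this i
    · rw [← hw]
      funext j
      simp [Matrix.vecMul, dotProduct]
    -- vecMul v Y = ∑ i, v i • Y i
  by_contra hall
  push_neg at hall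
  rw [cauchyBinet] at hG
  apply hG
  apply Finset.sum_eq_zero
  intro s _
  rw [hall s, zero_mul]

end Aux

/-- if `X` is `k`-sign consistent and every `k` columns of `X` are linearly
independent, then `T(σ)·X` is strictly `k`-sign consistent. -/
theorem stmt14 {n m : ℕ} (σ : ℝ) (hσ : 0 < σ) (X : Matrix (Fin n) (Fin m) ℝ) (k : ℕ)
    (hmn : m ≤ n) (hkm : k ≤ m)
    (hsc : SC X k)
    (hli : ∀ g : Fin k → Fin m, Function.Injective g →
      LinearIndependent ℝ (fun i : Fin k => X.transpose (g i))) :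
    SSC ((Matrix.of fun i j : Fin n =>
        Real.exp (-σ * (((i : ℕ) : ℝ) - ((j : ℕ) : ℝ)) ^ 2)) * X) k := by
  classical
  set T : Matrix (Fin n) (Fin n) ℝ :=
    Matrix.of fun i j : Fin n => Real.exp (-σ * (((i : ℕ) : ℝ) - ((j : ℕ) : ℝ)) ^ 2) with hT
  have hCB : ∀ (f : Fin k → Fin n) (g : Fin k → Fin m),
      ((T * X).submatrix f g).det = ∑ s : {s : Finset (Fin n) // s.card = k},
        (T.submatrix f (monoOf s)).det * (X.submatrix (monoOf s) g).det := by
    intro f g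
    have h1 : (T * X).submatrix f g = (T.submatrix f id) * (X.submatrix id g) := by
      ext a b
      simp [Matrix.mul_apply]
    rw [h1, cauchyBinet]
    refine Finset.sum_congr rfl fun s _ => ?_
    rw [Matrix.submatrix_submatrix, Matrix.submatrix_submatrix]
    simp
  have hmin : ∀ g : Fin k → Fin m, StrictMono g →
      ∃ s : {s : Finset (Fin n) // s.card = k}, (X.submatrix (monoOf s) g).det ≠ 0 := by
    intro g hg
    set Y : Matrix (Fin k) (Fin n) ℝ := Matrix.of fun i j => X j (g i) with hY
    have hliY : LinearIndependent ℝ (fun i : Fin k => Y i) := hli g hg.injective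
    obtain ⟨s, hs⟩ := exists_minor_ne_zero Y hliY
    refine ⟨s, fun h0 => hs ?_⟩
    rw [← Matrix.det_transpose]
    have heq : (Y.submatrix id (monoOf s))ᵀ = X.submatrix (monoOf s) g := by
      ext a b
      simp [hY]
    rw [heq]
    exact h0
  have hTpos : ∀ (f : Fin k → Fin n) (s : {s : Finset (Fin n) // s.card = k}), StrictMono f →
      0 < (T.submatrix f (monoOf s)).det := fun f s hf =>
    gauss_minor_pos σ hσ f (monoOf s) hf (monoOf_strictMono s)
  rcases hsc with hpos | hneg
  · left
    intro f g hf hg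
    rw [hCB f g]
    obtain ⟨s₀, hs₀⟩ := hmin g hg
    refine Finset.sum_pos' (fun s _ => mul_nonneg (hTpos f s hf).le
      (hpos (monoOf s) g (monoOf_strictMono s) hg)) ⟨s₀, Finset.mem_univ _, ?_⟩
    exact mul_pos (hTpos f s₀ hf)
      (lt_of_le_of_ne (hpos (monoOf s₀) g (monoOf_strictMono s₀) hg) (Ne.symm hs₀))
  · right
    intro f g hf hg
    rw [hCB f g]
    obtain ⟨s₀, hs₀⟩ := hmin g hg
    have hlt : 0 < ∑ s : {s : Finset (Fin n) // s.card = k},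
        -((T.submatrix f (monoOf s)).det * (X.submatrix (monoOf s) g).det) := by
      refine Finset.sum_pos' (fun s _ => ?_) ⟨s₀, Finset.mem_univ _, ?_⟩
      · rw [neg_nonneg]
        exact mul_nonpos_of_nonneg_of_nonpos (hTpos f s hf).le
          (hneg (monoOf s) g (monoOf_strictMono s) hg)
      · rw [neg_pos]
        exact mul_neg_of_pos_of_neg (hTpos f s₀ hf)
          (lt_of_le_of_ne (hneg (monoOf s₀) g (monoOf_strictMono s₀) hg) hs₀)
    rw [Finset.sum_neg_distrib] at hlt
    linarith
end

section
/- Let σ > 0 and let T(σ) be the n×n real matrix with entries T(σ)_{ij} = e^{−σ(i−j)²}. Let X be a real n×m matrix with m ≤ n and rank(X) = m, and let k ≤ m. If X is (k−1)-variation bounding, then T(σ)·X is strictly (k−1)-variation bounding. -/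
open Matrix Polynomial Filter

section AuxSVB
open Finset


/-- Generalized monomials with distinct exponents are independent over distinct positive nodes. -/
lemma poly_indep : ∀ (p : ℕ) (a : Fin p → ℕ), StrictMono a → ∀ (x : Fin p → ℝ),
    StrictMono x → (∀ i, 0 < x i) → ∀ (c : Fin p → ℝ),
    (∀ i, ∑ j, c j * x i ^ a j = 0) → ∀ j, c j = 0 := by
  intro p
  induction p with
  | zero => intro a _ x _ _ c _ j; exact j.elim0
  | succ p ih =>
    intro a ha x hx hx0 c hroot
    set g : ℝ → ℝ := fun t => ∑ j, c j * t ^ (a j - a 0) with hg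
    set g' : ℝ → ℝ := fun t => ∑ j, c j * ((a j - a 0 : ℕ) : ℝ) * t ^ (a j - a 0 - 1) with hg'
    have hgd : ∀ t : ℝ, HasDerivAt g (g' t) t := by
      intro t
      apply HasDerivAt.fun_sum
      intro j _
      simpa [mul_assoc, mul_comm, mul_left_comm] using
        ((hasDerivAt_pow (a j - a 0) t).const_mul (c j))
    have hgroot : ∀ i, g (x i) = 0 := by
      intro i
      have h1 : x i ^ (a 0) * g (x i) = 0 := by
        rw [hg]
        simp only [Finset.mul_sum]
        rw [← hroot i]
        apply Finset.sum_congr rfl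
        intro j _
        have h2 : a 0 + (a j - a 0) = a j := by
          have := (ha.monotone (Fin.zero_le j)); omega
        have hpow : x i ^ a j = x i ^ a 0 * x i ^ (a j - a 0) := by
          rw [← pow_add, h2]
        rw [hpow]; ring
      have := pow_ne_zero (a 0) (ne_of_gt (hx0 i))
      rcases mul_eq_zero.mp h1 with h | h
      · exact absurd h this
      · exact h
    -- Rolle to get p roots of g'
    have hy : ∀ i : Fin p, ∃ y, x i.castSucc < y ∧ y < x i.succ ∧ g' y = 0 := by
      intro i
      have hab : x i.castSucc < x i.succ := hx (Fin.castSucc_lt_succ (i := i))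
      obtain ⟨y, hy1, hy2⟩ := exists_hasDerivAt_eq_zero hab
        (Continuous.continuousOn (by continuity :
          Continuous g)) (by rw [hgroot, hgroot]) (fun t _ => hgd t)
      exact ⟨y, hy1.1, hy1.2, hy2⟩
    choose y hy1 hy2 hy3 using hy
    have hysm : StrictMono y := by
      intro i j hij
      calc y i < x i.succ := hy2 i
        _ ≤ x j.castSucc := by
            rcases eq_or_lt_of_le (Nat.succ_le_of_lt hij) with h | h
            · exact le_of_eq (congrArg x (by ext; simpa using h))
            · exact le_of_lt (hx (by simpa [Fin.lt_def] using h))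
        _ < y j := hy1 j
    have hy0 : ∀ i, 0 < y i := fun i => lt_trans (hx0 i.castSucc) (hy1 i)
    have hb : StrictMono (fun j : Fin p => a j.succ - a 0 - 1) := by
      intro i j hij
      have h1 : a i.succ < a j.succ := ha (by simpa using hij)
      have h2 : a 0 < a i.succ := ha (Fin.succ_pos i)
      dsimp only
      omega
    have hd := ih _ hb y hysm hy0 (fun j => c j.succ * ((a j.succ - a 0 : ℕ) : ℝ))
      (by
        intro i
        have h0 := hy3 i
        rw [hg'] at h0
        beta_reduce at h0
        rw [Fin.sum_univ_succ] at h0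
        simpa [mul_assoc] using h0)
    have hcs : ∀ j : Fin p, c j.succ = 0 := by
      intro j
      have h2 : a 0 < a j.succ := ha (Fin.succ_pos j)
      have hne : ((a j.succ - a 0 : ℕ) : ℝ) ≠ 0 := by
        simp only [ne_eq, Nat.cast_eq_zero]; omega
      exact (mul_eq_zero.mp (hd j)).resolve_right hne
    have hc0 : c 0 = 0 := by
      have h0 := hroot 0
      rw [Fin.sum_univ_succ] at h0
      have h1 : ∑ j : Fin p, c j.succ * x 0 ^ a j.succ = 0 :=
        Finset.sum_eq_zero (fun j _ => by rw [hcs j]; ring)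
      rw [h1, add_zero] at h0
      have := pow_ne_zero (a 0) (ne_of_gt (hx0 0))
      exact (mul_eq_zero.mp h0).resolve_right this
    intro j
    rcases Fin.eq_zero_or_eq_succ j with rfl | ⟨j', rfl⟩
    · exact hc0
    · exact hcs j'

lemma det_pow_ne_zero {p : ℕ} (a : Fin p → ℕ) (ha : StrictMono a) (x : Fin p → ℝ)
    (hx : StrictMono x) (hx0 : ∀ i, 0 < x i) :
    det (Matrix.of fun i j => x i ^ a j) ≠ 0 := by
  intro hdet
  obtain ⟨v, hv, hmv⟩ := (Matrix.exists_mulVec_eq_zero_iff).mpr hdet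
  refine hv (funext fun j => ?_)
  refine poly_indep p a ha x hx hx0 v (fun i => ?_) j
  have := congrFun hmv i
  simpa [Matrix.mulVec, dotProduct, mul_comm] using this

lemma det_pow_pos {p : ℕ} (a : Fin p → ℕ) (ha : StrictMono a) (x : Fin p → ℝ)
    (hx : StrictMono x) (hx0 : ∀ i, 0 < x i) :
    0 < det (Matrix.of fun i j => x i ^ a j) := by
  -- reference point
  set x₀ : Fin p → ℝ := fun i => 2 ^ (i : ℕ) with hx₀def
  have hx₀sm : StrictMono x₀ := fun i j hij => by
    exact pow_lt_pow_right₀ (by norm_num) hij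
  have hx₀pos : ∀ i, 0 < x₀ i := fun i => by positivity
  have hbase : 0 < det (Matrix.of fun i j => x₀ i ^ a j) := by
    have : (Matrix.of fun (i j : Fin p) => x₀ i ^ a j) =
        (Matrix.vandermonde (fun j => (2 : ℝ) ^ a j))ᵀ := by
      ext i j
      simp [Matrix.vandermonde, x₀, ← pow_mul, mul_comm]
    rw [this, Matrix.det_transpose, Matrix.det_vandermonde]
    apply Finset.prod_pos
    intro i _
    apply Finset.prod_pos
    intro j hj
    have : a i < a j := ha (Finset.mem_Ioi.mp hj)
    have : (2:ℝ) ^ a i < 2 ^ a j := pow_lt_pow_right₀ (by norm_num) this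
    linarith
  set L : ℝ → Fin p → ℝ := fun t i => (1 - t) * x₀ i + t * x i with hL
  have hLmem : ∀ t ∈ Set.Icc (0:ℝ) 1, StrictMono (L t) ∧ ∀ i, 0 < L t i := by
    intro t ht
    rcases eq_or_lt_of_le ht.2 with rfl | ht1
    · constructor
      · intro i j hij; simp only [hL]; norm_num; exact hx hij
      · intro i; simp only [hL]; norm_num; exact hx0 i
    · have h1t : 0 < 1 - t := by linarith
      constructor
      · intro i j hij
        have h1 : (1 - t) * x₀ i < (1 - t) * x₀ j := by
          exact mul_lt_mul_of_pos_left (hx₀sm hij) h1t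
        have h2 : t * x i ≤ t * x j := by
          exact mul_le_mul_of_nonneg_left (le_of_lt (hx hij)) ht.1
        simp only [hL]; linarith
      · intro i
        have h1 : 0 < (1 - t) * x₀ i := mul_pos h1t (hx₀pos i)
        have h2 : 0 ≤ t * x i := mul_nonneg ht.1 (le_of_lt (hx0 i))
        simp only [hL]; linarith
  set h : ℝ → ℝ := fun t => det (Matrix.of fun i j => L t i ^ a j) with hh
  have hcont : Continuous h := by
    apply Continuous.matrix_det
    apply continuous_matrix
    intro i j
    simp only [Matrix.of_apply, hL]
    fun_prop
  have hne : ∀ t ∈ Set.Icc (0:ℝ) 1, h t ≠ 0 := by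
    intro t ht
    exact det_pow_ne_zero a ha (L t) (hLmem t ht).1 (hLmem t ht).2
  have h0 : h 0 = det (Matrix.of fun i j => x₀ i ^ a j) := by
    simp only [hh, hL]; norm_num
  have h1 : h 1 = det (Matrix.of fun i j => x i ^ a j) := by
    simp only [hh, hL]; norm_num
  by_contra hle
  push_neg at hle
  have hlt : h 1 < 0 := lt_of_le_of_ne (h1 ▸ hle) (h1 ▸ hne 1 (by norm_num))
  have h0pos : 0 < h 0 := h0 ▸ hbase
  obtain ⟨t, ht, hht⟩ := intermediate_value_Icc' (by norm_num : (0:ℝ) ≤ 1)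
    (hcont.continuousOn) (Set.mem_Icc.mpr ⟨le_of_lt hlt, le_of_lt h0pos⟩)
  exact hne t ht hht

lemma gaussSTP {n : ℕ} (σ : ℝ) (hσ : 0 < σ) :
    STP (Matrix.of fun i j : Fin n => Real.exp (-σ * (((i : ℕ) : ℝ) - ((j : ℕ) : ℝ)) ^ 2)) := by
  intro p f g hf hg
  set v : Fin p → ℝ := fun i => Real.exp (-σ * ((f i : ℕ) : ℝ) ^ 2) with hv
  set w : Fin p → ℝ := fun j => Real.exp (-σ * ((g j : ℕ) : ℝ) ^ 2) with hw
  set x : Fin p → ℝ := fun i => Real.exp (2 * σ * ((f i : ℕ) : ℝ)) with hxd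
  set a : Fin p → ℕ := fun j => (g j : ℕ) with had
  have key : (Matrix.of fun i j : Fin n =>
      Real.exp (-σ * (((i : ℕ) : ℝ) - ((j : ℕ) : ℝ)) ^ 2)).submatrix f g =
      Matrix.of fun i j => v i *
        ((Matrix.of fun i j => w j * ((Matrix.of fun i j : Fin p => x i ^ a j) i j)) i j) := by
    ext i j
    simp only [Matrix.submatrix_apply, Matrix.of_apply, hv, hw, hxd, had]
    rw [← Real.exp_nat_mul, ← Real.exp_add, ← Real.exp_add]
    congr 1
    ring
  rw [key, Matrix.det_mul_column, Matrix.det_mul_row]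
  have hx : StrictMono x := by
    intro i j hij
    apply Real.exp_lt_exp.mpr
    have : (f i : ℕ) < (f j : ℕ) := hf hij
    have : ((f i : ℕ) : ℝ) < ((f j : ℕ) : ℝ) := by exact_mod_cast this
    nlinarith
  have ha : StrictMono a := fun i j hij => hg hij
  have hx0 : ∀ i, 0 < x i := fun i => Real.exp_pos _
  have hd := det_pow_pos a ha x hx hx0
  have h1 : 0 < ∏ i, v i := Finset.prod_pos (fun i _ => Real.exp_pos _)
  have h2 : 0 < ∏ i, w i := Finset.prod_pos (fun i _ => Real.exp_pos _)
  positivity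

noncomputable def flips (z : ℕ → ℝ) (t : ℕ) : ℕ :=
  ((Finset.range t).filter (fun s => z s * z (s + 1) < 0)).card

noncomputable def extF {q : ℕ} (F : Fin q → ℝ) : ℕ → ℝ :=
  fun s => if h : s < q then F ⟨s, h⟩ else 1

lemma flips_zero (z : ℕ → ℝ) : flips z 0 = 0 := by simp [flips]

lemma flips_succ (z : ℕ → ℝ) (t : ℕ) :
    flips z (t + 1) = flips z t + (if z t * z (t + 1) < 0 then 1 else 0) := by
  unfold flips
  rw [Finset.range_add_one, Finset.filter_insert]
  split
  · rw [Finset.card_insert_of_notMem (by simp)]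
  · simp

lemma flips_mono (z : ℕ → ℝ) : Monotone (flips z) := by
  intro s t hst
  exact Finset.card_le_card (Finset.filter_subset_filter _ (by simpa using hst))

lemma flips_hits (z : ℕ → ℝ) (T l : ℕ) (h : l ≤ flips z T) : ∃ t ≤ T, flips z t = l := by
  induction T with
  | zero => exact ⟨0, le_refl _, by rw [flips_zero] at h ⊢; omega⟩
  | succ T ih =>
    by_cases h2 : l ≤ flips z T
    · obtain ⟨t, ht, hft⟩ := ih h2
      exact ⟨t, le_trans ht (Nat.le_succ T), hft⟩
    · refine ⟨T + 1, le_refl _, ?_⟩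
      have := flips_succ z T
      split at this <;> omega

lemma sign_flips (z : ℕ → ℝ) (hz : ∀ s, z s ≠ 0) (t : ℕ) :
    0 < z 0 * z t * (-1 : ℝ) ^ (flips z t) := by
  induction t with
  | zero => rw [flips_zero]; simpa using mul_self_pos.mpr (hz 0)
  | succ t ih =>
    rw [flips_succ]
    have hzt2 : 0 < z t ^ 2 := lt_of_le_of_ne (sq_nonneg _) (Ne.symm (pow_ne_zero 2 (hz t)))
    by_cases hlt : z t * z (t + 1) < 0
    · rw [if_pos hlt, pow_succ]
      have h1 : (z 0 * z t * (-1 : ℝ) ^ flips z t) * (z t * z (t + 1)) < 0 :=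
        mul_neg_of_pos_of_neg ih hlt
      nlinarith [sq_nonneg (z t)]
    · rw [if_neg hlt, add_zero]
      have hne : z t * z (t + 1) ≠ 0 := mul_ne_zero (hz t) (hz (t + 1))
      have hpos : 0 < z t * z (t + 1) := lt_of_le_of_ne (not_lt.mp hlt) (Ne.symm hne)
      have h1 : 0 < (z 0 * z t * (-1 : ℝ) ^ flips z t) * (z t * z (t + 1)) :=
        mul_pos ih hpos
      nlinarith [sq_nonneg (z t)]

lemma countP_ofFn {q : ℕ} (f : Fin q → ℝ × ℝ) (p : ℝ × ℝ → Bool) :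
    (List.ofFn f).countP p = ∑ i : Fin q, (if p (f i) = true then 1 else 0) := by
  induction q with
  | zero => simp
  | succ q ih =>
    rw [List.ofFn_succ, List.countP_cons, ih, Fin.sum_univ_succ]
    simp [add_comm]

lemma zip_tail_ofFn {q : ℕ} (F : Fin q → ℝ) :
    (List.ofFn F).zip (List.ofFn F).tail =
      List.ofFn (fun i : Fin (q - 1) => (extF F i, extF F ((i : ℕ) + 1))) := by
  apply List.ext_getElem
  · simp [List.length_zip]
  · intro i h1 h2
    have hi : i < q - 1 := by simpa using h2
    have hiq : i < q := by omega
    have hiq2 : i + 1 < q := by omega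
    rw [List.getElem_zip, List.getElem_ofFn, List.getElem_ofFn, List.getElem_tail,
      List.getElem_ofFn]
    simp [extF, hiq, hiq2]

lemma signChanges_eq_flips {q : ℕ} (F : Fin q → ℝ) :
    signChanges (List.ofFn F) = flips (extF F) (q - 1) := by
  rw [signChanges, zip_tail_ofFn, countP_ofFn, flips, Finset.card_filter,
    ← Fin.sum_univ_eq_sum_range]
  apply Finset.sum_congr rfl
  intro i _
  simp

lemma count_lt_iff {N n' : ℕ} (r : Fin N → Fin n') (hr : StrictMono r) (x : Fin n')
    (l : Fin N) :
    (r l < x ↔ (l : ℕ) < (Finset.univ.filter fun l' => r l' < x).card) := by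
  classical
  constructor
  · intro h
    have hsub : Finset.Iic l ⊆ Finset.univ.filter fun l' => r l' < x := by
      intro l' hl'
      simp only [Finset.mem_filter, Finset.mem_univ, true_and]
      exact lt_of_le_of_lt (hr.monotone (Finset.mem_Iic.mp hl')) h
    have := Finset.card_le_card hsub
    rw [Fin.card_Iic] at this
    omega
  · intro h
    by_contra hc
    push_neg at hc
    have hsub : (Finset.univ.filter fun l' => r l' < x) ⊆ Finset.Iio l := by
      intro l' hl'
      simp only [Finset.mem_filter, Finset.mem_univ, true_and] at hl'
      rw [Finset.mem_Iio]
      by_contra hge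
      push_neg at hge
      exact absurd (lt_of_le_of_lt (hr.monotone hge) hl') (not_lt.mpr hc)
    have := Finset.card_le_card hsub
    rw [Fin.card_Iio] at this
    omega

lemma alt_rows_zero {n p : ℕ} (B : Matrix (Fin n) (Fin p) ℝ)
    (hB : ∀ r : Fin p → Fin n, StrictMono r → 0 < det (B.submatrix r id))
    (c : Fin p → ℝ) (r : Fin (p + 1) → Fin n) (hr : StrictMono r)
    (ε : ℝ) (hε : ε ≠ 0)
    (hsign : ∀ j : Fin (p + 1), 0 ≤ ε * (-1) ^ (j : ℕ) * (B.mulVec c) (r j)) :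
    ∀ j, (B.mulVec c) (r j) = 0 := by
  set y : Fin n → ℝ := B.mulVec c with hy
  set D : Fin (p + 1) → ℝ := fun i => det (B.submatrix (r ∘ i.succAbove) id) with hD
  have hDpos : ∀ i, 0 < D i := fun i => hB _ (hr.comp (Fin.strictMono_succAbove i))
  have key : ∀ l : Fin p, ∑ i : Fin (p + 1), (-1 : ℝ) ^ (i : ℕ) * B (r i) l * D i = 0 := by
    intro l
    set M : Matrix (Fin (p + 1)) (Fin (p + 1)) ℝ := Matrix.of fun i j =>
      if h : (j : ℕ) < p then B (r i) ⟨(j : ℕ), h⟩ else B (r i) l with hM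
    have hMdet : det M = 0 := by
      apply Matrix.det_zero_of_column_eq (i := Fin.castSucc l) (j := Fin.last p)
      · exact ne_of_lt (Fin.castSucc_lt_last l)
      · intro k
        simp only [hM, Matrix.of_apply, Fin.coe_castSucc, Fin.val_last]
        rw [dif_pos l.isLt, dif_neg (lt_irrefl p)]
    have hexp := Matrix.det_succ_column M (Fin.last p)
    rw [hMdet] at hexp
    have hterm : ∀ i : Fin (p + 1),
        (-1 : ℝ) ^ ((i : ℕ) + (Fin.last p : ℕ)) * M i (Fin.last p) *
          det (M.submatrix i.succAbove (Fin.last p).succAbove) =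
        (-1 : ℝ) ^ (p : ℕ) * ((-1 : ℝ) ^ (i : ℕ) * B (r i) l * D i) := by
      intro i
      have h1 : M i (Fin.last p) = B (r i) l := by
        simp only [hM, Matrix.of_apply, Fin.val_last]
        rw [dif_neg (lt_irrefl p)]
      have h2 : M.submatrix i.succAbove (Fin.last p).succAbove =
          B.submatrix (r ∘ i.succAbove) id := by
        ext i' j'
        simp only [Matrix.submatrix_apply, hM, Matrix.of_apply, Fin.succAbove_last,
          Fin.coe_castSucc, Function.comp_apply, id_eq]
        rw [dif_pos j'.isLt]
      rw [h1, h2, pow_add]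
      simp only [Fin.val_last, hD]
      ring
    rw [Finset.sum_congr rfl (fun i _ => hterm i), ← Finset.mul_sum] at hexp
    have hne : ((-1 : ℝ) ^ p) ≠ 0 := by
      simp
    have := (mul_eq_zero.mp hexp.symm).resolve_left hne
    exact this
  have main : ∑ i : Fin (p + 1), (ε * (-1 : ℝ) ^ (i : ℕ) * y (r i)) * D i = 0 := by
    have hyi : ∀ i, y (r i) = ∑ l : Fin p, B (r i) l * c l := by
      intro i
      simp [hy, Matrix.mulVec, dotProduct]
    calc ∑ i : Fin (p + 1), (ε * (-1 : ℝ) ^ (i : ℕ) * y (r i)) * D i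
        = ∑ i : Fin (p + 1), ∑ l : Fin p,
            ε * c l * ((-1 : ℝ) ^ (i : ℕ) * B (r i) l * D i) := by
          apply Finset.sum_congr rfl
          intro i _
          rw [hyi i, Finset.mul_sum, Finset.sum_mul]
          apply Finset.sum_congr rfl
          intro l _
          ring
      _ = ∑ l : Fin p, ∑ i : Fin (p + 1),
            ε * c l * ((-1 : ℝ) ^ (i : ℕ) * B (r i) l * D i) := Finset.sum_comm
      _ = 0 := by
          apply Finset.sum_eq_zero
          intro l _
          rw [← Finset.mul_sum, key l, mul_zero]
  intro j
  have hterm := (Finset.sum_eq_zero_iff_of_nonneg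
    (fun i _ => mul_nonneg (hsign i) (le_of_lt (hDpos i)))).mp main j (Finset.mem_univ j)
  have h1 : ε * (-1 : ℝ) ^ (j : ℕ) * y (r j) = 0 := by
    rcases mul_eq_zero.mp hterm with h | h
    · exact h
    · exact absurd h (ne_of_gt (hDpos j))
  have h2 : (ε * (-1 : ℝ) ^ (j : ℕ)) ≠ 0 := mul_ne_zero hε (by simp)
  rw [mul_assoc] at h1
  rcases mul_eq_zero.mp h1 with h | h
  · exact absurd h hε
  · exact (mul_eq_zero.mp h).resolve_left (by simp)

lemma abs_eq_sign_mul {s x : ℝ} (hs : s = 1 ∨ s = -1) (hx : 0 < s * x) :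
    x = s * |x| := by
  rcases hs with rfl | rfl
  · rw [one_mul] at hx ⊢; exact (abs_of_pos hx).symm
  · have : x < 0 := by linarith
    rw [abs_of_neg this]; ring

lemma mainSVB {n : ℕ} (T : Matrix (Fin n) (Fin n) ℝ) (hT : STP T) (K : ℕ)
    (v : Fin n → ℝ) (hv0 : v ≠ 0) (hy0 : T.mulVec v ≠ 0) (hvar : variation v ≤ (K : ℤ)) :
    maxVariation (T.mulVec v) ≤ (K : ℤ) := by
  classical
  set y : Fin n → ℝ := T.mulVec v with hy
  -- support enumeration
  set S : List (Fin n) := (List.finRange n).filter (fun j => decide (v j ≠ 0)) with hS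
  set q : ℕ := S.length with hqdef
  have hmemS : ∀ j : Fin n, j ∈ S ↔ v j ≠ 0 := by
    intro j; simp [hS, List.mem_filter, List.mem_finRange]
  have hq : 0 < q := by
    obtain ⟨j, hj⟩ := Function.ne_iff.mp hv0
    have : j ∈ S := (hmemS j).mpr hj
    rw [hqdef]
    exact List.length_pos_iff.mpr (List.ne_nil_of_mem this)
  set e : Fin q → Fin n := S.get with he
  have hesm : StrictMono e := by
    apply List.SortedLT.strictMono_get
    exact ((List.pairwise_lt_finRange n).filter _).sortedLT
  have hve : ∀ t : Fin q, v (e t) ≠ 0 := by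
    intro t
    exact (hmemS (e t)).mp (List.get_mem S t)
  -- filtered list
  have hfl : ((List.ofFn v).filter fun x => decide (x ≠ 0)) = List.ofFn (fun t => v (e t)) := by
    rw [List.ofFn_eq_map, List.filter_map]
    rw [show ((fun x => decide (x ≠ 0)) ∘ v) = (fun j => decide (v j ≠ 0)) from rfl]
    rw [← hS, ← List.ofFn_get S, List.map_ofFn]
    rfl
  set z : ℕ → ℝ := extF (fun t => v (e t)) with hz
  have hzne : ∀ s, z s ≠ 0 := by
    intro s
    rw [hz, extF]
    split
    · apply hve
    · norm_num
  have hzt : ∀ t : Fin q, z (t : ℕ) = v (e t) := by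
    intro t
    rw [hz, extF, dif_pos t.isLt]
  set V : ℕ := flips z (q - 1) with hV
  have hVK : V ≤ K := by
    have h1 : variation v = (V : ℤ) := by
      rw [variation, if_neg, hfl, signChanges_eq_flips]
      rw [hfl]
      simp only [ne_eq, List.ofFn_eq_nil_iff]
      omega
    rw [h1] at hvar
    exact_mod_cast hvar
  set p : ℕ := V + 1 with hp
  have haV : ∀ t : Fin q, flips z (t : ℕ) ≤ V := by
    intro t
    exact flips_mono z (by omega : (t : ℕ) ≤ q - 1)
  set δ : ℝ := if 0 < v (e ⟨0, hq⟩) then 1 else -1 with hδ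
  have hδpm : δ = 1 ∨ δ = -1 := by rw [hδ]; split <;> simp
  have hδz0 : 0 < δ * z 0 := by
    have h0 : z 0 = v (e ⟨0, hq⟩) := hzt ⟨0, hq⟩
    rw [hδ, h0]
    split
    · simpa using ‹_›
    · rcases (hve ⟨0, hq⟩).lt_or_gt with h | h
      · simpa using by nlinarith
      · exact absurd h ‹¬ 0 < v (e ⟨0, hq⟩)›
  have hsgnpos : ∀ t : Fin q, 0 < (δ * (-1) ^ (flips z (t : ℕ))) * v (e t) := by
    intro t
    have h1 := sign_flips z hzne (t : ℕ)
    rw [hzt t] at h1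
    have h2 : (0:ℝ) < z 0 ^ 2 := lt_of_le_of_ne (sq_nonneg _) (Ne.symm (pow_ne_zero 2 (hzne 0)))
    nlinarith
  have hsgn : ∀ t : Fin q, v (e t) = δ * (-1) ^ (flips z (t : ℕ)) * |v (e t)| := by
    intro t
    apply abs_eq_sign_mul _ (hsgnpos t)
    rcases hδpm with h | h <;>
      rcases neg_one_pow_eq_or ℝ (flips z (t : ℕ)) with h2 | h2 <;>
      rw [h, h2] <;> norm_num
  -- block index
  set aF : Fin q → Fin p := fun t => ⟨flips z (t : ℕ), by have := haV t; omega⟩ with haF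
  have haFmono : ∀ t t' : Fin q, t ≤ t' → aF t ≤ aF t' := by
    intro t t' h
    simp only [haF, Fin.mk_le_mk]
    exact flips_mono z h
  -- the block matrix
  set B : Matrix (Fin n) (Fin p) ℝ := Matrix.of fun i l =>
    ∑ t : Fin q, if aF t = l then |v (e t)| * T i (e t) else 0 with hB
  set c : Fin p → ℝ := fun l => δ * (-1) ^ (l : ℕ) with hc
  have hrep : ∀ i, y i = (B.mulVec c) i := by
    intro i
    have hstep1 : y i = ∑ t : Fin q, T i (e t) * v (e t) := by
      rw [hy]
      show ∑ j, T i j * v j = _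
      rw [← Finset.sum_filter_of_ne (p := fun j => v j ≠ 0)
        (fun j _ hj => right_ne_zero_of_mul hj)]
      apply (Finset.sum_bij (fun (t : Fin q) _ => e t) ?_ ?_ ?_ ?_).symm
      · intro t _
        simp only [Finset.mem_filter, Finset.mem_univ, true_and]
        exact hve t
      · intro t _ t' _ h
        exact hesm.injective h
      · intro j hj
        have hvj : v j ≠ 0 := (Finset.mem_filter.mp hj).2
        obtain ⟨t, hget⟩ := List.mem_iff_get.mp ((hmemS j).mpr hvj)
        exact ⟨t, Finset.mem_univ _, hget⟩
      · intro t _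
        rfl
    have hmv : (B.mulVec c) i = ∑ l : Fin p, B i l * c l := by
      simp [Matrix.mulVec, dotProduct]
    rw [hstep1]
    calc ∑ t : Fin q, T i (e t) * v (e t)
        = ∑ t : Fin q, ∑ l : Fin p, (if aF t = l then |v (e t)| * T i (e t) else 0) * c l := by
          apply Finset.sum_congr rfl
          intro t _
          rw [Finset.sum_congr rfl (fun l _ => by rw [ite_mul, zero_mul]),
            Finset.sum_ite_eq, if_pos (Finset.mem_univ _)]
          conv_lhs => rw [hsgn t]
          simp only [hc]
          ring
      _ = ∑ l : Fin p, ∑ t : Fin q, (if aF t = l then |v (e t)| * T i (e t) else 0) * c l :=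
          Finset.sum_comm
      _ = ∑ l : Fin p, (∑ t : Fin q, if aF t = l then |v (e t)| * T i (e t) else 0) * c l :=
          Finset.sum_congr rfl fun l _ => (Finset.sum_mul _ _ _).symm
      _ = (B.mulVec c) i := by
          rw [hmv]
          rfl
  -- minor positivity of B
  have hBminor : ∀ r : Fin p → Fin n, StrictMono r → 0 < det (B.submatrix r id) := by
    intro r hr
    set f := (Matrix.detRowAlternating (R := ℝ) (n := Fin p)).toMultilinearMap with hf
    have hconv : ∀ M : Matrix (Fin p) (Fin p) ℝ, f M = det M := fun M => rfl
    set g : Fin p → Fin q → (Fin p → ℝ) := fun l t =>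
      (fun i' => if aF t = l then |v (e t)| * T (r i') (e t) else 0) with hg
    have hM : ((B.submatrix r id)ᵀ) = fun l => ∑ t : Fin q, g l t := by
      funext l i'
      simp only [Matrix.transpose_apply, Matrix.submatrix_apply, id_eq, hB, Matrix.of_apply,
        Finset.sum_apply, hg]
    rw [← Matrix.det_transpose, ← hconv ((B.submatrix r id)ᵀ)]
    have hdet0 : f ((B.submatrix r id)ᵀ) = f (fun l => ∑ t ∈ Finset.univ, g l t) :=
      congrArg _ hM
    rw [hdet0, MultilinearMap.map_sum_finset f g (fun _ => (Finset.univ : Finset (Fin q)))]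
    have hterm : ∀ G : Fin p → Fin q, (∀ l, aF (G l) = l) →
        f (fun l => g l (G l)) =
        (∏ l, |v (e (G l))|) * det (T.submatrix r (fun l => e (G l))) := by
      intro G hG
      have h1 : (fun l => g l (G l)) =
          fun l => |v (e (G l))| • ((T.submatrix r (fun l' => e (G l')))ᵀ l) := by
        funext l i'
        simp only [hg, if_pos (hG l), Pi.smul_apply, smul_eq_mul, Matrix.transpose_apply,
          Matrix.submatrix_apply]
      rw [h1, MultilinearMap.map_smul_univ f (fun l => |v (e (G l))|)
          (fun l => (T.submatrix r (fun l' => e (G l')))ᵀ l),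
        hconv ((T.submatrix r (fun l' => e (G l')))ᵀ), Matrix.det_transpose]
      simp [smul_eq_mul]
    have hsm : ∀ G : Fin p → Fin q, (∀ l, aF (G l) = l) → StrictMono (fun l => e (G l)) := by
      intro G hG
      apply hesm.comp
      intro l l' hll'
      by_contra hc2
      push_neg at hc2
      have := haFmono _ _ hc2
      rw [hG l, hG l'] at this
      exact absurd hll' (not_lt.mpr this)
    apply Finset.sum_pos'
    · intro G _
      by_cases hG : ∀ l, aF (G l) = l
      · rw [hterm G hG]
        have h2 := hT p r (fun l => e (G l)) hr (hsm G hG)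
        have hprod : 0 < ∏ l, |v (e (G l))| :=
          Finset.prod_pos (fun l _ => abs_pos.mpr (hve (G l)))
        exact le_of_lt (mul_pos hprod h2)
      · push_neg at hG
        obtain ⟨l, hl⟩ := hG
        have hzero : (fun l => g l (G l)) l = 0 := by
          funext i'
          simp only [hg, if_neg hl, Pi.zero_apply]
        rw [f.map_coord_zero l hzero]
    · have hex : ∀ l : Fin p, ∃ t : Fin q, aF t = l := by
        intro l
        obtain ⟨t, ht, hft⟩ := flips_hits z (q - 1) (l : ℕ) (by rw [← hV]; omega)
        refine ⟨⟨t, by omega⟩, ?_⟩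
        apply Fin.ext
        exact hft
      choose G₀ hG₀ using hex
      refine ⟨G₀, by simp [Fintype.mem_piFinset], ?_⟩
      rw [hterm G₀ hG₀]
      have h2 := hT p r (fun l => e (G₀ l)) hr (hsm G₀ hG₀)
      have hprod : 0 < ∏ l, |v (e (G₀ l))| :=
        Finset.prod_pos (fun l _ => abs_pos.mpr (hve (G₀ l)))
      exact mul_pos hprod h2
  -- now bound the max variation
  have hn : 0 < n := by
    have hqn : q ≤ n := by
      rw [hqdef, hS]
      exact le_trans (List.length_filter_le _ _) (by simp)
    omega
  have hwitness : ∀ i : Fin n, (if y i = 0 then (1:ℝ) else y i) ≠ 0 := by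
    intro i
    split
    · norm_num
    · assumption
  apply csSup_le
  · exact ⟨(signChanges (List.ofFn (fun i => if y i = 0 then 1 else y i)) : ℤ),
      (fun i => if y i = 0 then 1 else y i),
      hwitness,
      fun i hi => by dsimp only; rw [if_neg hi],
      rfl⟩
  rintro b ⟨w, hw0, hwy, rfl⟩
  have hbound : signChanges (List.ofFn w) ≤ K := by
    by_contra hKlt
    push_neg at hKlt
    set zw : ℕ → ℝ := extF w with hzw
    have hzwne : ∀ s, zw s ≠ 0 := by
      intro s
      rw [hzw, extF]
      split
      · apply hw0
      · norm_num
    have hzwt : ∀ i : Fin n, zw (i : ℕ) = w i := by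
      intro i
      rw [hzw, extF, dif_pos i.isLt]
    have hflw : K + 1 ≤ flips zw (n - 1) := by
      have := signChanges_eq_flips w
      rw [← hzw] at this
      omega
    -- extract K+2 alternating indices
    have hPex : ∀ l : Fin (K + 2), ∃ t, flips zw t = (l : ℕ) ∧ t ≤ n - 1 := by
      intro l
      obtain ⟨t, ht, hft⟩ := flips_hits zw (n - 1) (l : ℕ) (by omega)
      exact ⟨t, hft, ht⟩
    choose tl htl htl2 using hPex
    set r : Fin (K + 2) → Fin n := fun l => ⟨tl l, by have := htl2 l; omega⟩ with hrdef
    have hrsm : StrictMono r := by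
      intro l l' hll'
      simp only [hrdef, Fin.mk_lt_mk]
      by_contra hc
      push_neg at hc
      have := flips_mono zw hc
      rw [htl l, htl l'] at this
      exact absurd hll' (not_lt.mpr (by exact_mod_cast this))
    have hwsign : ∀ l : Fin (K + 2), 0 < zw 0 * w (r l) * (-1 : ℝ) ^ (l : ℕ) := by
      intro l
      have h1 := sign_flips zw hzwne (tl l)
      rw [htl l] at h1
      have h2 : zw ((r l : Fin n) : ℕ) = w (r l) := hzwt (r l)
      rw [show zw (tl l) = zw ((r l : Fin n) : ℕ) from rfl, h2] at h1
      exact h1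
    have hpK : p ≤ K + 1 := by omega
    -- windows: y vanishes on all chosen indices
    have hyzero : ∀ l : Fin (K + 2), y (r l) = 0 := by
      intro l
      set s : ℕ := min (l : ℕ) (K + 1 - p) with hs
      have hsl : s ≤ (l : ℕ) := min_le_left _ _
      have hsp : s + p ≤ K + 1 := by
        have := min_le_right (l : ℕ) (K + 1 - p)
        omega
      have hls : (l : ℕ) ≤ s + p := by
        rcases le_or_gt (l : ℕ) (K + 1 - p) with h | h
        · have : s = (l : ℕ) := by omega
          omega
        · have : s = K + 1 - p := by omega
          have := l.isLt
          omega
      set rw' : Fin (p + 1) → Fin n := fun j => r ⟨s + (j : ℕ), by have := j.isLt; omega⟩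
        with hrw'
      have hrw'sm : StrictMono rw' := by
        intro j j' hjj'
        apply hrsm
        simp only [Fin.mk_lt_mk]
        omega
      have hz0 : zw 0 ≠ 0 := hzwne 0
      have hall := alt_rows_zero B hBminor c rw' hrw'sm (zw 0 * (-1 : ℝ) ^ s)
        (by
          apply mul_ne_zero hz0
          simp)
        (by
          intro j
          rcases eq_or_ne ((B.mulVec c) (rw' j)) 0 with h0 | h0
          · rw [h0, mul_zero]
          · have hy' : y (rw' j) ≠ 0 := by rw [hrep]; exact h0
            have hwj : w (rw' j) = y (rw' j) := hwy _ hy'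
            have := hwsign ⟨s + (j : ℕ), by have := j.isLt; omega⟩
            rw [show (B.mulVec c) (rw' j) = y (rw' j) from (hrep _).symm, ← hwj]
            have hpow : (-1 : ℝ) ^ (s + (j : ℕ)) = (-1 : ℝ) ^ s * (-1 : ℝ) ^ (j : ℕ) :=
              pow_add _ _ _
            apply le_of_lt
            calc (0:ℝ) < zw 0 * w (r ⟨s + (j : ℕ), _⟩) * (-1 : ℝ) ^ (s + (j : ℕ)) := this
              _ = zw 0 * (-1 : ℝ) ^ s * (-1 : ℝ) ^ (j : ℕ) * w (rw' j) := by
                  rw [hpow, hrw']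
                  ring)
      have hj : (l : ℕ) - s < p + 1 := by omega
      have := hall ⟨(l : ℕ) - s, hj⟩
      rw [← hrep] at this
      suffices hsuff : rw' ⟨(l : ℕ) - s, hj⟩ = r l by
        rw [← hsuff]
        exact this
      simp only [hrw']
      congr 1
      apply Fin.ext
      simp only
      omega
    -- insertion of a nonzero coordinate
    obtain ⟨istar, histar⟩ := Function.ne_iff.mp hy0
    simp only [Pi.zero_apply] at histar
    set cnt : ℕ := (Finset.univ.filter fun l' : Fin (K + 2) => r l' < istar).card with hcnt
    have hcntle : cnt ≤ K + 2 := le_trans (Finset.card_filter_le _ _) (by simp)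
    have hcnt_iff : ∀ l : Fin (K + 2), (r l < istar ↔ (l : ℕ) < cnt) :=
      fun l => count_lt_iff r hrsm istar l
    set c' : ℕ := min cnt p with hc'
    set o : ℕ := cnt - c' with ho
    have hne_r : ∀ l : Fin (K + 2), r l ≠ istar := by
      intro l h
      rw [← h] at histar
      exact histar (hyzero l)
    have hidx1 : ∀ j : Fin (p + 1), (j : ℕ) < c' → o + (j : ℕ) < K + 2 := by
      intro j hj
      omega
    have hidx2 : ∀ j : Fin (p + 1), ¬ (j : ℕ) < c' → (j : ℕ) ≠ c' →
        o + (j : ℕ) - 1 < K + 2 := by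
      intro j h1 h2
      have := j.isLt
      omega
    set r' : Fin (p + 1) → Fin n := fun j =>
      if h : (j : ℕ) < c' then r ⟨o + (j : ℕ), hidx1 j h⟩
      else if h2 : (j : ℕ) = c' then istar
      else r ⟨o + (j : ℕ) - 1, hidx2 j h h2⟩ with hr'
    have hr'c : r' ⟨c', by omega⟩ = istar := by
      simp [hr']
    have hr'lt : ∀ j : Fin (p + 1), (j : ℕ) < c' → r' j < istar := by
      intro j hj
      simp only [hr', dif_pos hj]
      rw [hcnt_iff]
      simp only
      omega
    have hr'gt : ∀ j : Fin (p + 1), c' < (j : ℕ) → istar < r' j := by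
      intro j hj
      have h1 : ¬ (j : ℕ) < c' := by omega
      have h2 : (j : ℕ) ≠ c' := by omega
      simp only [hr', dif_neg h1, dif_neg h2]
      have hge : ¬ (r ⟨o + (j : ℕ) - 1, hidx2 j h1 h2⟩ < istar) := by
        rw [hcnt_iff]
        simp only
        omega
      rcases lt_or_eq_of_le (not_lt.mp hge) with h | h
      · exact h
      · exact absurd h.symm (hne_r _)
    have hr'zero : ∀ j : Fin (p + 1), (j : ℕ) ≠ c' → y (r' j) = 0 := by
      intro j hj
      rcases lt_or_gt_of_ne hj with h | h
      · simp only [hr', dif_pos h]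
        exact hyzero _
      · have h1 : ¬ (j : ℕ) < c' := by omega
        simp only [hr', dif_neg h1, dif_neg hj]
        exact hyzero _
    have hr'sm : StrictMono r' := by
      intro j j' hjj'
      have hjv : (j : ℕ) < (j' : ℕ) := hjj'
      rcases lt_trichotomy ((j' : ℕ)) c' with h' | h' | h'
      · -- both < c'
        have hjc : (j : ℕ) < c' := by omega
        simp only [hr', dif_pos hjc, dif_pos h']
        apply hrsm
        simp only [Fin.mk_lt_mk]
        omega
      · -- j' = c'
        have hjc : (j : ℕ) < c' := by omega
        have := hr'lt j hjc
        have h2 : r' j' = istar := by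
          simp only [hr']
          rw [dif_neg (by omega), dif_pos h']
        rw [h2]
        exact this
      · -- j' > c'
        rcases lt_trichotomy ((j : ℕ)) c' with h | h | h
        · have h1 : ¬ (j' : ℕ) < c' := by omega
          have h2 : (j' : ℕ) ≠ c' := by omega
          simp only [hr', dif_pos h, dif_neg h1, dif_neg h2]
          apply hrsm
          simp only [Fin.mk_lt_mk]
          omega
        · have h2 : r' j = istar := by
            simp only [hr']
            rw [dif_neg (by omega), dif_pos h]
          rw [h2]
          exact hr'gt j' h'
        · have h1 : ¬ (j : ℕ) < c' := by omega
          have h1' : ¬ (j' : ℕ) < c' := by omega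
          simp only [hr', dif_neg h1, dif_neg (by omega : ¬ (j:ℕ) = c'),
            dif_neg h1', dif_neg (by omega : ¬ (j':ℕ) = c')]
          apply hrsm
          simp only [Fin.mk_lt_mk]
          omega
    have hfinal := alt_rows_zero B hBminor c r' hr'sm ((-1 : ℝ) ^ c' * y istar)
      (mul_ne_zero (by simp) histar)
      (by
        intro j
        rcases eq_or_ne ((j : ℕ)) c' with h | h
        · have hrj : r' j = istar := by
            simp only [hr']
            rw [dif_neg (by omega), dif_pos h]
          rw [hrj, ← hrep istar, h]
          have h2 : ((-1 : ℝ) ^ c') * ((-1 : ℝ) ^ c') = 1 := by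
            rw [← pow_add]
            exact Even.neg_one_pow ⟨c', rfl⟩
          nlinarith [mul_self_nonneg (y istar)]
        · rw [← hrep, hr'zero j h, mul_zero])
    have := hfinal ⟨c', by omega⟩
    rw [← hrep, hr'c] at this
    exact histar this
  exact_mod_cast hbound

end AuxSVB

/-- if `rank X = m ≤ n` and `X` is `(k-1)`-variation bounding, `k ≤ m`,
then `T(σ)·X` is strictly `(k-1)`-variation bounding. -/
theorem stmt15 {n m : ℕ} (σ : ℝ) (hσ : 0 < σ) (X : Matrix (Fin n) (Fin m) ℝ) (k : ℕ)
    (hmn : m ≤ n) (hrk : X.rank = m) (hkm : k ≤ m)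
    (hvb : VB X (k - 1)) :
    SVB ((Matrix.of fun i j : Fin n =>
        Real.exp (-σ * (((i : ℕ) : ℝ) - ((j : ℕ) : ℝ)) ^ 2)) * X) (k - 1) := by
  classical
  set T : Matrix (Fin n) (Fin n) ℝ :=
    Matrix.of fun i j : Fin n => Real.exp (-σ * (((i : ℕ) : ℝ) - ((j : ℕ) : ℝ)) ^ 2) with hTdef
  have hT : STP T := gaussSTP σ hσ
  have hTdet : T.det ≠ 0 := by
    have := hT n id id strictMono_id strictMono_id
    rw [Matrix.submatrix_id_id] at this
    exact ne_of_gt this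
  -- X has trivial kernel
  have hXker : ∀ u : Fin m → ℝ, X.mulVec u = 0 → u = 0 := by
    have h1 := LinearMap.finrank_range_add_finrank_ker X.mulVecLin
    have h2 : Module.finrank ℝ (LinearMap.range X.mulVecLin) = m := hrk
    have h3 : Module.finrank ℝ (Fin m → ℝ) = m := by simp
    have h4 : Module.finrank ℝ (LinearMap.ker X.mulVecLin) = 0 := by omega
    have h5 : LinearMap.ker X.mulVecLin = ⊥ := Submodule.finrank_eq_zero.mp h4
    exact Matrix.ker_mulVecLin_eq_bot_iff.mp h5
  intro u hu hvaru
  have hXu : X.mulVec u ≠ 0 := fun h => hu (hXker u h)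
  have hTXu : T.mulVec (X.mulVec u) ≠ 0 := by
    intro h
    apply hTdet
    rw [← Matrix.exists_mulVec_eq_zero_iff]
    exact ⟨X.mulVec u, hXu, h⟩
  have hvarXu := hvb u hu hvaru
  have hmain := mainSVB T hT (k - 1) (X.mulVec u) hXu hTXu hvarXu
  rwa [Matrix.mulVec_mulVec] at hmain
end
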